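/- arXiv:0807.0956 — 6 statements merged into one kernel-verified Lean document; each statement's English description precedes it below -/
import Mathlib

section
/- For a nonsingular n×n real matrix A with inverse Γ, the componentwise condition number of the determinant satisfies c_det(A) = Σ_{i,j ∈ [n]} |a_{ij} γ_{ji}|, where c_det(A) = lim_{δ→0} sup_{A' ∈ B(A,δ), A' ≠ A} |det(A') − det(A)| / (δ |det(A)|) and B(A,δ) = {A' : |a'_{ij} − a_{ij}| ≤ δ|a_{ij}| for all i,j}. -/
open Matrix Filter Set
open scoped ENNReal Topology

/-- The componentwise ball of relative radius `δ` around a matrix `A`. -/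
def cball {m : ℕ} (A : Matrix (Fin m) (Fin m) ℝ) (δ : ℝ) :
    Set (Matrix (Fin m) (Fin m) ℝ) :=
  {A' | ∀ i j, |A' i j - A i j| ≤ δ * |A i j|}

/-- The componentwise condition number of the determinant at `A`:
`lim_{δ→0⁺} sup_{A' ∈ B(A,δ)} |det A' − det A| / (δ |det A|)` (with values in `ℝ≥0∞`). -/
noncomputable def cdet {m : ℕ} (A : Matrix (Fin m) (Fin m) ℝ) : ℝ≥0∞ :=
  limsup
    (fun δ : ℝ => ⨆ A' ∈ cball A δ,
      ENNReal.ofReal |A'.det - A.det| / ENNReal.ofReal (δ * |A.det|))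
    (𝓝[>] (0 : ℝ))

/-- The determinant, as a continuous multilinear map in the rows. -/
noncomputable def detCM (m : ℕ) :
    ContinuousMultilinearMap ℝ (fun _ : Fin m => (Fin m → ℝ)) ℝ :=
  (Matrix.detRowAlternating (R := ℝ) (n := Fin m)).toMultilinearMap.mkContinuous
    (Nat.factorial m) (by
      intro v
      have hv : (Matrix.detRowAlternating (R := ℝ) (n := Fin m)).toMultilinearMap v
          = Matrix.det (Matrix.of v) := rfl
      rw [hv, Matrix.det_apply]
      calc ‖∑ σ : Equiv.Perm (Fin m), Equiv.Perm.sign σ • ∏ i, Matrix.of v (σ i) i‖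
          ≤ ∑ σ : Equiv.Perm (Fin m), ‖Equiv.Perm.sign σ • ∏ i, Matrix.of v (σ i) i‖ :=
            norm_sum_le _ _
        _ ≤ ∑ _σ : Equiv.Perm (Fin m), ∏ i, ‖v i‖ := by
            refine Finset.sum_le_sum fun σ _ => ?_
            have h1 : ‖Equiv.Perm.sign σ • ∏ i, Matrix.of v (σ i) i‖
                = ‖∏ i, v (σ i) i‖ := by
              rcases Int.units_eq_one_or (Equiv.Perm.sign σ) with h | h <;>
                simp [h, Units.smul_def, Matrix.of_apply]
            rw [h1]
            calc ‖∏ i, v (σ i) i‖ ≤ ∏ i, ‖v (σ i) i‖ := by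
                  rw [Real.norm_eq_abs, Finset.abs_prod]
                  simp [Real.norm_eq_abs]
              _ ≤ ∏ i, ‖v (σ i)‖ := by
                  refine Finset.prod_le_prod (fun i _ => norm_nonneg _) fun i _ => ?_
                  exact norm_le_pi_norm (v (σ i)) i
              _ = ∏ i, ‖v i‖ := Equiv.prod_comp σ fun i => ‖v i‖
        _ = (Nat.factorial m : ℝ) * ∏ i, ‖v i‖ := by
            rw [Finset.sum_const, Finset.card_univ, Fintype.card_perm, Fintype.card_fin,
              nsmul_eq_mul])

lemma detCM_apply (m : ℕ) (M : Matrix (Fin m) (Fin m) ℝ) :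
    detCM m (fun i j => M i j) = M.det := rfl

lemma detCM_linearDeriv (m : ℕ) (A : Matrix (Fin m) (Fin m) ℝ) (E : Fin m → Fin m → ℝ) :
    (detCM m).linearDeriv (fun i j => A i j) E = ∑ i, ∑ j, E i j * A.adjugate j i := by
  classical
  rw [ContinuousMultilinearMap.linearDeriv_apply]
  refine Finset.sum_congr rfl fun i _ => ?_
  have h1 : (detCM m) (Function.update (fun i j => A i j) i (E i))
      = (A.updateRow i (E i)).det := rfl
  rw [h1, ← Matrix.cramer_transpose_apply, Matrix.cramer_eq_adjugate_mulVec,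
    Matrix.mulVec]
  simp only [dotProduct]
  refine Finset.sum_congr rfl fun j _ => ?_
  rw [← Matrix.adjugate_transpose, Matrix.transpose_apply, mul_comm]

set_option maxHeartbeats 1000000 in
/-- For a nonsingular matrix `A` with inverse `Γ = A⁻¹`,
`c_det(A) = Σ_{i,j} |a_{ij} γ_{ji}|`. -/
theorem cdet_eq_sum_abs_entries_inv
    (m : ℕ) (A : Matrix (Fin m) (Fin m) ℝ) (hA : IsUnit A.det) :
    cdet A = ENNReal.ofReal (∑ i, ∑ j, |A i j * A⁻¹ j i|) := by
  classical
  have hd : A.det ≠ 0 := hA.ne_zero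
  have hd' : (0:ℝ) < |A.det| := abs_pos.mpr hd
  set T : ℝ := ∑ i, ∑ j, |A i j * A⁻¹ j i| with hT
  have hT0 : 0 ≤ T :=
    Finset.sum_nonneg fun i _ => Finset.sum_nonneg fun j _ => abs_nonneg _
  set S : ℝ := ∑ i, ∑ j, |A i j * A.adjugate j i| with hS
  have hadj : ∀ i j : Fin m, A.adjugate j i = A.det * A⁻¹ j i := by
    intro i j
    rw [Matrix.inv_def, Matrix.smul_apply, Ring.inverse_eq_inv', smul_eq_mul]
    field_simp
  have hST : S = |A.det| * T := by
    rw [hS, hT, Finset.mul_sum]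
    refine Finset.sum_congr rfl fun i _ => ?_
    rw [Finset.mul_sum]
    refine Finset.sum_congr rfl fun j _ => ?_
    rw [hadj i j, ← abs_mul]
    ring_nf
  set A₀ : Fin m → Fin m → ℝ := fun i j => A i j with hA₀
  set D := (detCM m).linearDeriv A₀ with hDdef
  have hDf : HasFDerivAt (detCM m) D A₀ := (detCM m).hasFDerivAt A₀
  have HLO := hasFDerivAt_iff_isLittleO_nhds_zero.mp hDf
  have hdet0 : detCM m A₀ = A.det := rfl
  have hDE : ∀ E : Fin m → Fin m → ℝ, D E = ∑ i, ∑ j, E i j * A.adjugate j i :=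
    fun E => detCM_linearDeriv m A E
  have key : Tendsto (fun δ : ℝ => ⨆ A' ∈ cball A δ,
      ENNReal.ofReal |A'.det - A.det| / ENNReal.ofReal (δ * |A.det|)) (𝓝[>] (0:ℝ))
      (𝓝 (ENNReal.ofReal T)) := by
    rw [ENNReal.tendsto_nhds (by simp : ENNReal.ofReal T ≠ ⊤)]
    intro ε hε
    obtain ⟨e, he0, hee⟩ : ∃ e : ℝ, 0 < e ∧ ENNReal.ofReal e ≤ ε := by
      rcases eq_or_ne ε ⊤ with h | h
      · exact ⟨1, one_pos, h ▸ le_top⟩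
      · exact ⟨ε.toReal, ENNReal.toReal_pos hε.ne' h, by rw [ENNReal.ofReal_toReal h]⟩
    have hN : (0:ℝ) < ‖A₀‖ + 1 := by positivity
    set c : ℝ := e * |A.det| / (‖A₀‖ + 1) with hc
    have hc0 : 0 < c := by positivity
    obtain ⟨r, hr0, hr⟩ := Metric.eventually_nhds_iff.mp (HLO.def hc0)
    filter_upwards [Ioo_mem_nhdsGT_of_mem
      (show (0:ℝ) ∈ Ico (0:ℝ) (r / (‖A₀‖ + 1)) from ⟨le_refl 0, by positivity⟩)]
    intro δ hδ
    obtain ⟨hδ0, hδr⟩ := hδ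
    have hδd : (0:ℝ) < δ * |A.det| := by positivity
    -- basic estimates for perturbations within the componentwise ball
    have hlo : ∀ E : Fin m → Fin m → ℝ, (∀ i j, |E i j| ≤ δ * |A i j|) →
        |detCM m (A₀ + E) - A.det - D E| ≤ δ * (e * |A.det|) := by
      intro E hE
      have h1 : ‖E‖ ≤ δ * ‖A₀‖ := by
        refine (pi_norm_le_iff_of_nonneg (by positivity)).mpr fun i => ?_
        refine (pi_norm_le_iff_of_nonneg (by positivity)).mpr fun j => ?_
        refine (hE i j).trans ?_
        have h2 : |A i j| ≤ ‖A₀‖ := by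
          have := (norm_le_pi_norm (A₀ i) j).trans (norm_le_pi_norm A₀ i)
          simpa [hA₀] using this
        nlinarith
      have h2 : dist E 0 < r := by
        rw [dist_zero_right]
        have h3 : δ * ‖A₀‖ < δ * (‖A₀‖ + 1) := by nlinarith
        have h4 : δ * (‖A₀‖ + 1) < r := (lt_div_iff₀ hN).mp hδr
        calc ‖E‖ ≤ δ * ‖A₀‖ := h1
          _ < r := by linarith
      have h5 := hr h2
      rw [hdet0] at h5
      have h6 : c * ‖E‖ ≤ c * (δ * ‖A₀‖) := by nlinarith
      have h7 : c * (δ * ‖A₀‖) ≤ δ * (e * |A.det|) := by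
        rw [hc]
        rw [div_mul_eq_mul_div, div_le_iff₀ hN]
        nlinarith [norm_nonneg A₀]
      calc |detCM m (A₀ + E) - A.det - D E| ≤ c * ‖E‖ := by
            simpa [Real.norm_eq_abs] using h5
        _ ≤ δ * (e * |A.det|) := le_trans h6 h7
    have hDbound : ∀ E : Fin m → Fin m → ℝ, (∀ i j, |E i j| ≤ δ * |A i j|) →
        |D E| ≤ δ * S := by
      intro E hE
      rw [hDE E, hS, Finset.mul_sum]
      refine (Finset.abs_sum_le_sum_abs _ _).trans (Finset.sum_le_sum fun i _ => ?_)
      rw [Finset.mul_sum]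
      refine (Finset.abs_sum_le_sum_abs _ _).trans (Finset.sum_le_sum fun j _ => ?_)
      rw [abs_mul, abs_mul]
      have := hE i j
      nlinarith [abs_nonneg (A.adjugate j i), abs_nonneg (E i j), abs_nonneg (A i j)]
    rw [mem_Icc]
    constructor
    · -- lower bound via an extremal perturbation
      set s : Fin m → Fin m → ℝ :=
        fun i j => if 0 ≤ A i j * A.adjugate j i then A i j else -(A i j) with hs
      set E : Fin m → Fin m → ℝ := fun i j => δ * s i j with hEdef
      have hsabs : ∀ i j, |s i j| = |A i j| := by
        intro i j
        simp only [hs]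
        split <;> simp [abs_neg]
      have hEb : ∀ i j, |E i j| ≤ δ * |A i j| := by
        intro i j
        simp only [hEdef]
        rw [abs_mul, abs_of_pos hδ0, hsabs i j]
      set W : Matrix (Fin m) (Fin m) ℝ := Matrix.of fun i j => A i j + δ * s i j with hWdef
      have hW : W ∈ cball A δ := by
        intro i j
        have hwij : W i j - A i j = δ * s i j := by simp [hWdef]
        rw [hwij, abs_mul, abs_of_pos hδ0, hsabs i j]
      have hAEW : A₀ + E = fun i j => W i j := by
        funext i j
        simp [hA₀, hEdef, hWdef]
      have hDEs : D E = δ * S := by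
        rw [hDE E, hS, Finset.mul_sum]
        refine Finset.sum_congr rfl fun i _ => ?_
        rw [Finset.mul_sum]
        refine Finset.sum_congr rfl fun j _ => ?_
        simp only [hEdef, hs]
        split <;> rename_i h
        · rw [abs_of_nonneg h]; ring
        · rw [abs_of_neg (lt_of_not_ge h)]; ring
      have herr := hlo E hEb
      rw [hAEW, detCM_apply, hDEs] at herr
      have hlow : δ * |A.det| * (T - e) ≤ |W.det - A.det| := by
        have h8 : δ * S - δ * (e * |A.det|) ≤ |W.det - A.det| := by
          have h9 : |δ * S| - |W.det - A.det - δ * S| ≤ |W.det - A.det| := by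
            have := abs_sub_abs_le_abs_sub (δ * S) (δ * S - (W.det - A.det))
            have habs : |δ * S - (δ * S - (W.det - A.det))| = |W.det - A.det| := by
              congr 1; ring
            have habs2 : |W.det - A.det - δ * S| = |δ * S - (W.det - A.det)| :=
              abs_sub_comm _ _
            rw [habs] at this
            rw [habs2]
            linarith
          have h10 : |δ * S| = δ * S := by
            rw [abs_of_nonneg]
            have hS0 : 0 ≤ S := by rw [hST]; positivity
            positivity
          rw [h10] at h9
          linarith
        rw [hST] at h8
        nlinarith
      calc ENNReal.ofReal T - ε ≤ ENNReal.ofReal T - ENNReal.ofReal e :=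
            tsub_le_tsub_left hee _
        _ = ENNReal.ofReal (T - e) := (ENNReal.ofReal_sub T he0.le).symm
        _ = ENNReal.ofReal ((δ * |A.det| * (T - e)) / (δ * |A.det|)) := by
            rw [mul_comm (δ * |A.det|) (T - e), mul_div_assoc, div_self hδd.ne', mul_one]
        _ = ENNReal.ofReal (δ * |A.det| * (T - e)) / ENNReal.ofReal (δ * |A.det|) :=
            ENNReal.ofReal_div_of_pos hδd
        _ ≤ ENNReal.ofReal |W.det - A.det| / ENNReal.ofReal (δ * |A.det|) :=
            ENNReal.div_le_div_right (ENNReal.ofReal_le_ofReal hlow) _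
        _ ≤ ⨆ A' ∈ cball A δ,
              ENNReal.ofReal |A'.det - A.det| / ENNReal.ofReal (δ * |A.det|) :=
            le_iSup₂_of_le W hW le_rfl
    · -- upper bound
      refine iSup₂_le fun A' hA' => ?_
      set E : Fin m → Fin m → ℝ := fun i j => A' i j - A i j with hEdef
      have hEb : ∀ i j, |E i j| ≤ δ * |A i j| := fun i j => hA' i j
      have hAEW : A₀ + E = fun i j => A' i j := by
        funext i j
        simp [hA₀, hEdef]
      have herr := hlo E hEb
      rw [hAEW, detCM_apply] at herr
      have hup : |A'.det - A.det| ≤ δ * |A.det| * (T + e) := by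
        have h11 := hDbound E hEb
        have h12 : |A'.det - A.det| ≤ |D E| + δ * (e * |A.det|) := by
          have := abs_sub_abs_le_abs_sub (A'.det - A.det) (A'.det - A.det - D E)
          have habs : |A'.det - A.det - (A'.det - A.det - D E)| = |D E| := by
            congr 1; ring
          rw [habs] at this
          linarith [abs_nonneg (A'.det - A.det - D E), le_abs_self (A'.det - A.det)]
        rw [hST] at h11
        nlinarith
      have h13 : ENNReal.ofReal |A'.det - A.det| / ENNReal.ofReal (δ * |A.det|)
          ≤ ENNReal.ofReal (δ * |A.det| * (T + e)) / ENNReal.ofReal (δ * |A.det|) :=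
        ENNReal.div_le_div_right (ENNReal.ofReal_le_ofReal hup) _
      have h14 : ENNReal.ofReal (δ * |A.det| * (T + e)) / ENNReal.ofReal (δ * |A.det|)
          = ENNReal.ofReal (T + e) := by
        rw [← ENNReal.ofReal_div_of_pos hδd, mul_comm (δ * |A.det|) (T + e),
          mul_div_assoc, div_self hδd.ne', mul_one]
      have h15 : ENNReal.ofReal (T + e) ≤ ENNReal.ofReal T + ε := by
        rw [ENNReal.ofReal_add hT0 he0.le]
        exact add_le_add_right hee _
      exact le_trans h13 (le_trans (le_of_eq h14) h15)
  rw [show cdet A = limsup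
    (fun δ : ℝ => ⨆ A' ∈ cball A δ,
      ENNReal.ofReal |A'.det - A.det| / ENNReal.ofReal (δ * |A.det|))
    (𝓝[>] (0 : ℝ)) from rfl]
  exact key.limsup_eq
end

section
/- Let S ⊆ [n]² and let A be a random matrix with independent standard Gaussian entries at positions in S and zeros elsewhere. Then for all t ≥ 2|S|, Prob{ Σ_{(i,j)∈S} |a_{ij} det(A_{(ij)}) / det(A)| ≥ t } ≤ |S|²/t, provided det is not identically zero on M_S; if det vanishes identically on M_S the componentwise condition number of the determinant is 0 everywhere on M_S. -/
open MeasureTheory ProbabilityTheory Matrix Filter Set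
open scoped ENNReal Topology

/-- The sparse matrix with support `S` built from the coordinates `g`. -/
noncomputable def matOf {n : ℕ} (S : Finset (Fin n × Fin n)) (g : S → ℝ) :
    Matrix (Fin n) (Fin n) ℝ :=
  Matrix.of fun i j => if h : (i, j) ∈ S then g ⟨(i, j), h⟩ else 0

/-- The product standard Gaussian measure on the coordinates indexed by `S`. -/
noncomputable def gaussS {n : ℕ} (S : Finset (Fin n × Fin n)) : Measure (S → ℝ) :=
  Measure.pi fun _ => gaussianReal 0 1

/-! ### Auxiliary analytic lemmas -/

lemma mul_exp_le_aux (u : ℝ) (hu : 0 ≤ u) :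
    u * Real.exp (-(u^2)/2) ≤ Real.exp (-(1:ℝ)/2) := by
  have h2 : u ≤ Real.exp ((u^2-1)/2) := by
    nlinarith [Real.add_one_le_exp ((u^2-1)/2), sq_nonneg (u-1)]
  calc u * Real.exp (-(u^2)/2)
      ≤ Real.exp ((u^2-1)/2) * Real.exp (-(u^2)/2) :=
        mul_le_mul_of_nonneg_right h2 (Real.exp_nonneg _)
    _ = Real.exp (-(1:ℝ)/2) := by rw [← Real.exp_add]; ring_nf

lemma sqrt_two_pi_ge : (2.5:ℝ) ≤ Real.sqrt (2*Real.pi) := by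
  rw [show (2.5:ℝ) = Real.sqrt (2.5^2) by rw [Real.sqrt_sq]; norm_num]
  apply Real.sqrt_le_sqrt
  nlinarith [Real.pi_gt_d6]

lemma exp_neg_half_le : Real.exp (-(1:ℝ)/2) ≤ 0.61 := by
  have h1 : Real.exp (1/2 : ℝ) * Real.exp (1/2 : ℝ) = Real.exp 1 := by
    rw [← Real.exp_add]; norm_num
  have h2 : Real.exp (-(1:ℝ)/2) * Real.exp (1/2 : ℝ) = 1 := by
    rw [← Real.exp_add]; norm_num
  nlinarith [Real.exp_one_gt_d9, Real.exp_pos (1/2 : ℝ), Real.exp_pos (-(1:ℝ)/2)]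

lemma calcR {s ρ : ℝ} (hs : 2 ≤ s) (hρ : 0 < ρ) :
    (2*s*ρ/(s^2-1)) * (Real.exp (-(s*ρ/(s+1))^2/2) / Real.sqrt (2*Real.pi)) ≤ 1/s := by
  have hs1 : (0:ℝ) < s - 1 := by linarith
  have hsp : (0:ℝ) < s + 1 := by linarith
  have hs0 : (0:ℝ) < s := by linarith
  set u := s*ρ/(s+1) with hu
  have hu0 : 0 < u := by positivity
  have key : u * Real.exp (-(u^2)/2) ≤ 0.61 :=
    (mul_exp_le_aux u hu0.le).trans exp_neg_half_le
  have hsqrt : (0:ℝ) < Real.sqrt (2*Real.pi) := by positivity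
  have hne1 : s - 1 ≠ 0 := ne_of_gt hs1
  have hne2 : s + 1 ≠ 0 := ne_of_gt hsp
  have hne3 : s^2 - 1 ≠ 0 := by nlinarith
  have hrρ : 2*s*ρ/(s^2-1) = (2/(s-1)) * u := by
    rw [hu]
    field_simp
    ring
  rw [hrρ]
  have hstep : (2/(s-1)) * u * (Real.exp (-(u^2)/2) / Real.sqrt (2*Real.pi))
      = (2/(s-1)) * (u * Real.exp (-(u^2)/2)) / Real.sqrt (2*Real.pi) := by ring
  rw [hstep]
  rw [div_le_div_iff₀ hsqrt hs0]
  have : (2/(s-1)) * (u * Real.exp (-(u^2)/2)) * s ≤ (2/(s-1)) * 0.61 * s := by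
    have := mul_le_mul_of_nonneg_left key (by positivity : (0:ℝ) ≤ 2/(s-1))
    exact mul_le_mul_of_nonneg_right this hs0.le
  refine this.trans ?_
  have h25 := sqrt_two_pi_ge
  rw [div_mul_eq_mul_div, div_mul_eq_mul_div, div_le_iff₀ hs1]
  nlinarith

lemma gauss_Icc_le {a b m : ℝ} (hab : a ≤ b) (hm : 0 ≤ m)
    (h : ∀ x ∈ Set.Icc a b, m ≤ |x|) :
    gaussianReal 0 1 (Set.Icc a b) ≤
      ENNReal.ofReal ((b - a) * (Real.exp (-(m^2)/2) / Real.sqrt (2*Real.pi))) := by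
  rw [gaussianReal_apply 0 one_ne_zero]
  have hpt : ∀ x ∈ Set.Icc a b, gaussianPDF 0 1 x ≤
      ENNReal.ofReal (Real.exp (-(m^2)/2) / Real.sqrt (2*Real.pi)) := by
    intro x hx
    rw [gaussianPDF]
    apply ENNReal.ofReal_le_ofReal
    rw [gaussianPDFReal, NNReal.coe_one, mul_one, sub_zero, inv_mul_eq_div]
    rw [div_le_div_iff_of_pos_right (by positivity : (0:ℝ) < Real.sqrt (2*Real.pi))]
    apply Real.exp_le_exp.2
    nlinarith [h x hx, abs_nonneg x, sq_abs x]
  calc ∫⁻ x in Set.Icc a b, gaussianPDF 0 1 x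
      ≤ ∫⁻ _ in Set.Icc a b,
          ENNReal.ofReal (Real.exp (-(m^2)/2) / Real.sqrt (2*Real.pi)) :=
        setLIntegral_mono measurable_const hpt
    _ = ENNReal.ofReal (Real.exp (-(m^2)/2) / Real.sqrt (2*Real.pi))
          * volume (Set.Icc a b) := by
        rw [setLIntegral_const]
    _ = ENNReal.ofReal ((b - a) * (Real.exp (-(m^2)/2) / Real.sqrt (2*Real.pi))) := by
        rw [Real.volume_Icc, ← ENNReal.ofReal_mul (by positivity), mul_comm]

lemma event_subset_interval {s r : ℝ} (hs : 2 ≤ s) (hr : r ≠ 0) :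
    ∃ a b : ℝ, a ≤ b ∧ {x : ℝ | s*|x+r| ≤ |x|} ⊆ Set.Icc a b ∧
      b - a ≤ 2*s*|r|/(s^2-1) ∧ ∀ x ∈ Set.Icc a b, s*|r|/(s+1) ≤ |x| := by
  have hs1 : (0:ℝ) < s - 1 := by linarith
  have hsp : (0:ℝ) < s + 1 := by linarith
  have hs0 : (0:ℝ) < s := by linarith
  have hne3 : (0:ℝ) < s^2 - 1 := by nlinarith
  rcases hr.lt_or_gt with hrneg | hrpos
  · -- r < 0
    refine ⟨-s*r/(s+1), -s*r/(s-1), ?_, ?_, ?_, ?_⟩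
    · rw [div_le_div_iff₀ hsp hs1]; nlinarith
    · intro x hx
      simp only [Set.mem_setOf_eq] at hx
      have hm1 : s*(x+r) ≤ s*|x+r| :=
        mul_le_mul_of_nonneg_left (le_abs_self _) hs0.le
      have hm2 : s*(-(x+r)) ≤ s*|x+r| :=
        mul_le_mul_of_nonneg_left (neg_le_abs _) hs0.le
      have hxpos : 0 < x := by
        by_contra hc
        push_neg at hc
        rw [abs_of_nonpos hc] at hx
        nlinarith
      rw [abs_of_pos hxpos] at hx
      constructor
      · rw [div_le_iff₀ hsp]; nlinarith
      · rw [le_div_iff₀ hs1]; nlinarith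
    · rw [abs_of_neg hrneg]
      have : -s*r/(s-1) - -s*r/(s+1) = 2*s*(-r)/(s^2-1) := by
        field_simp
        ring
      linarith [this.le]
    · intro x hx
      have hxlb := hx.1
      rw [div_le_iff₀ hsp] at hxlb
      have hx0 : 0 < x := by nlinarith
      rw [abs_of_neg hrneg, abs_of_pos hx0, div_le_iff₀ hsp]
      nlinarith
  · -- r > 0
    refine ⟨-s*r/(s-1), -s*r/(s+1), ?_, ?_, ?_, ?_⟩
    · rw [div_le_div_iff₀ hs1 hsp]; nlinarith
    · intro x hx
      simp only [Set.mem_setOf_eq] at hx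
      have hm1 : s*(x+r) ≤ s*|x+r| :=
        mul_le_mul_of_nonneg_left (le_abs_self _) hs0.le
      have hm2 : s*(-(x+r)) ≤ s*|x+r| :=
        mul_le_mul_of_nonneg_left (neg_le_abs _) hs0.le
      have hxneg : x < 0 := by
        by_contra hc
        push_neg at hc
        rw [abs_of_nonneg hc] at hx
        nlinarith
      rw [abs_of_neg hxneg] at hx
      constructor
      · rw [div_le_iff₀ hs1]; nlinarith
      · rw [le_div_iff₀ hsp]; nlinarith
    · rw [abs_of_pos hrpos]
      have : -s*r/(s+1) - -s*r/(s-1) = 2*s*r/(s^2-1) := by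
        field_simp
        ring
      linarith [this.le]
    · intro x hx
      have hxub := hx.2
      rw [le_div_iff₀ hsp] at hxub
      have hx0 : x < 0 := by nlinarith
      rw [abs_of_pos hrpos, abs_of_neg hx0, div_le_iff₀ hsp]
      nlinarith

lemma gauss_event_le {s c d M : ℝ} (hs : 2 ≤ s) (hcM : |c| = |M|) :
    gaussianReal 0 1 {x | s ≤ |x * M / (x * c + d)|} ≤ ENNReal.ofReal (1/s) := by
  have hs0 : (0:ℝ) < s := by linarith
  by_cases hM : M = 0
  · have hempty : {x : ℝ | s ≤ |x * M / (x * c + d)|} = ∅ := by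
      ext x
      simp only [Set.mem_setOf_eq, hM, mul_zero, zero_div, abs_zero,
        Set.mem_empty_iff_false, iff_false, not_le]
      linarith
    rw [hempty, measure_empty]
    exact zero_le
  · have hc : c ≠ 0 := fun h0 => hM (abs_eq_zero.1 (by rw [← hcM, h0, abs_zero]))
    have hc0 : 0 < |c| := abs_pos.2 hc
    have hsub : {x : ℝ | s ≤ |x * M / (x * c + d)|} ⊆ {x | s*|x + d/c| ≤ |x|} := by
      intro x hx
      simp only [Set.mem_setOf_eq] at hx ⊢
      have hden : x*c + d ≠ 0 := by
        intro h0
        rw [h0, div_zero, abs_zero] at hx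
        linarith
      have h1 : |x*c + d| = |c| * |x + d/c| := by
        rw [← abs_mul]
        congr 1
        field_simp
      rw [abs_div, abs_mul] at hx
      have hdpos : 0 < |x*c+d| := abs_pos.2 hden
      rw [le_div_iff₀ hdpos] at hx
      rw [h1, ← hcM] at hx
      exact le_of_mul_le_mul_right (by nlinarith [abs_nonneg (x + d/c)]) hc0
    by_cases hr : d/c = 0
    · have hsub2 : {x : ℝ | s*|x + d/c| ≤ |x|} ⊆ {(0:ℝ)} := by
        intro x hx
        simp only [Set.mem_setOf_eq, hr, add_zero] at hx
        have : |x| = 0 := by nlinarith [abs_nonneg x]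
        simpa using abs_eq_zero.1 this
      have h0 : gaussianReal 0 1 {(0:ℝ)} = 0 :=
        gaussianReal_absolutelyContinuous 0 one_ne_zero Real.volume_singleton
      calc gaussianReal 0 1 {x | s ≤ |x * M / (x * c + d)|}
          ≤ gaussianReal 0 1 {(0:ℝ)} := measure_mono (hsub.trans hsub2)
        _ = 0 := h0
        _ ≤ ENNReal.ofReal (1/s) := zero_le
    · obtain ⟨a, b, hab, hIb, hlen, hmin⟩ := event_subset_interval hs hr
      calc gaussianReal 0 1 {x | s ≤ |x * M / (x * c + d)|}
          ≤ gaussianReal 0 1 (Set.Icc a b) := measure_mono (hsub.trans hIb)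
        _ ≤ ENNReal.ofReal ((b - a) *
            (Real.exp (-((s*|d/c|/(s+1))^2)/2) / Real.sqrt (2*Real.pi))) :=
            gauss_Icc_le hab (by positivity) hmin
        _ ≤ ENNReal.ofReal (1/s) := by
            apply ENNReal.ofReal_le_ofReal
            calc (b - a) * (Real.exp (-((s*|d/c|/(s+1))^2)/2) / Real.sqrt (2*Real.pi))
                ≤ (2*s*|d/c|/(s^2-1)) *
                  (Real.exp (-((s*|d/c|/(s+1))^2)/2) / Real.sqrt (2*Real.pi)) :=
                  mul_le_mul_of_nonneg_right hlen (by positivity)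
              _ ≤ 1/s := calcR hs (abs_pos.2 hr)

lemma pi_update_bound {ι : Type*} [Fintype ι] [DecidableEq ι]
    (μ : Measure ℝ) [IsProbabilityMeasure μ] (p : ι)
    {E : Set (ι → ℝ)} (hE : MeasurableSet E) (c : ℝ≥0∞)
    (h : ∀ f : ι → ℝ, μ {x | Function.update f p x ∈ E} ≤ c) :
    Measure.pi (fun _ : ι => μ) E ≤ c := by
  classical
  set P : ι → Prop := fun q => q ≠ p with hP
  haveI : Unique {q // ¬ P q} :=
    ⟨⟨⟨p, by simp [hP]⟩⟩, fun q => Subtype.ext (not_not.1 q.2)⟩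
  set e := MeasurableEquiv.piEquivPiSubtypeProd (fun _ : ι => ℝ) P with he
  have hmp := measurePreserving_piEquivPiSubtypeProd (fun _ : ι => μ) P
  have hEq : Measure.pi (fun _ : ι => μ) E =
      ((Measure.pi fun _ : Subtype P => μ).prod (Measure.pi fun _ : {q // ¬ P q} => μ))
        (e.symm ⁻¹' E) := ((hmp.symm e).measure_preimage hE.nullMeasurableSet).symm
  set f₀ : (Subtype P → ℝ) → ι → ℝ := fun x => e.symm (x, fun _ => 0) with hf₀
  have key : ∀ (x : Subtype P → ℝ) (y : {q // ¬ P q} → ℝ),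
      e.symm (x, y) = Function.update (f₀ x) p (y default) := by
    intro x y
    funext q
    by_cases hq : P q
    · have hqp : q ≠ p := hq
      rw [Function.update_of_ne hqp]
      show (Equiv.piEquivPiSubtypeProd P (fun _ : ι => ℝ)).symm (x, y) q =
        (Equiv.piEquivPiSubtypeProd P (fun _ : ι => ℝ)).symm (x, fun _ => 0) q
      show (if h : P q then x ⟨q, h⟩ else y ⟨q, h⟩) = if h : P q then x ⟨q, h⟩ else 0
      rw [dif_pos hq, dif_pos hq]
    · have hqp : q = p := not_not.1 hq
      subst hqp
      rw [Function.update_self]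
      show (Equiv.piEquivPiSubtypeProd P (fun _ : ι => ℝ)).symm (x, y) q = y default
      simp only [Equiv.piEquivPiSubtypeProd_symm_apply, dif_neg hq]
      exact congrArg y (Subsingleton.elim _ _)
  have hT : ∀ x : Subtype P → ℝ, MeasurableSet {z : ℝ | Function.update (f₀ x) p z ∈ E} :=
    fun x => measurable_update (f₀ x) hE
  have hpre : MeasurableSet (e.symm ⁻¹' E) := e.symm.measurable hE
  rw [hEq, Measure.prod_apply hpre]
  have hsl : ∀ x : Subtype P → ℝ,
      (Measure.pi fun _ : {q // ¬ P q} => μ) (Prod.mk x ⁻¹' (e.symm ⁻¹' E)) ≤ c := by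
    intro x
    have hset : Prod.mk x ⁻¹' (e.symm ⁻¹' E) =
        (MeasurableEquiv.funUnique {q // ¬ P q} ℝ) ⁻¹'
          {z : ℝ | Function.update (f₀ x) p z ∈ E} := by
      ext y
      simp only [Set.mem_preimage, Set.mem_setOf_eq]
      rw [key]
      rfl
    rw [hset]
    have hfin : ∀ (F G : Fintype {q // ¬ P q}),
        @Measure.pi _ (fun _ => ℝ) F _ (fun _ => μ) =
        @Measure.pi _ (fun _ => ℝ) G _ (fun _ => μ) := fun F G => by
      rw [Subsingleton.elim F G]
    rw [hfin _ (Unique.fintype)]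
    exact ((measurePreserving_funUnique μ ({q // ¬ P q})).measure_preimage
      (hT x).nullMeasurableSet).trans_le (h (f₀ x))
  calc ∫⁻ x, (Measure.pi fun _ : {q // ¬ P q} => μ) (Prod.mk x ⁻¹' (e.symm ⁻¹' E))
        ∂(Measure.pi fun _ : Subtype P => μ)
      ≤ ∫⁻ _, c ∂(Measure.pi fun _ : Subtype P => μ) := lintegral_mono hsl
    _ = c := by simp [lintegral_const]

lemma matOf_update {n : ℕ} (S : Finset (Fin (n+1) × Fin (n+1)))
    (i₀ j₀ : Fin (n+1)) (hp : (i₀, j₀) ∈ S) (f : S → ℝ) (x : ℝ) :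
    matOf S (Function.update f ⟨(i₀, j₀), hp⟩ x) =
      (matOf S f).updateRow i₀ (Function.update (matOf S f i₀) j₀ x) := by
  ext i j
  simp only [matOf, Matrix.of_apply, Matrix.updateRow_apply, Function.update_apply,
    Subtype.mk.injEq, Prod.mk.injEq]
  by_cases hi : i = i₀
  · subst hi
    by_cases hj : j = j₀
    · subst hj
      simp [hp]
    · simp [hj]
  · simp [hi]

lemma det_affine {n : ℕ} (B : Matrix (Fin (n+1)) (Fin (n+1)) ℝ) (i₀ j₀ : Fin (n+1)) (x : ℝ) :
    (B.updateRow i₀ (Function.update (B i₀) j₀ x)).det =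
      x * (B.updateRow i₀ (Pi.single j₀ 1)).det
        + (B.updateRow i₀ (Function.update (B i₀) j₀ 0)).det := by
  have hrow : Function.update (B i₀) j₀ x =
      Function.update (B i₀) j₀ 0 + x • (Pi.single j₀ (1:ℝ) : Fin (n+1) → ℝ) := by
    funext j
    by_cases hj : j = j₀
    · subst hj; simp
    · simp [Function.update_of_ne hj, Pi.single_eq_of_ne hj]
  rw [hrow]
  rw [add_comm (Function.update (B i₀) j₀ 0)]
  rw [Matrix.det_updateRow_add, Matrix.det_updateRow_smul]

lemma abs_coeff_eq {n : ℕ} (B : Matrix (Fin (n+1)) (Fin (n+1)) ℝ) (i₀ j₀ : Fin (n+1)) :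
    |(B.updateRow i₀ (Pi.single j₀ 1)).det| =
      |(B.submatrix i₀.succAbove j₀.succAbove).det| := by
  have h1 : (B.updateRow i₀ (Pi.single j₀ 1)).det = B.adjugate j₀ i₀ :=
    (Matrix.adjugate_apply B j₀ i₀).symm
  rw [h1, Matrix.adjugate_fin_succ_eq_det_submatrix]
  rw [abs_mul, abs_pow, abs_neg, abs_one, one_pow, one_mul]

/-- The single term of the condition-number sum. -/
noncomputable def Fterm {n : ℕ} (S : Finset (Fin (n+1) × Fin (n+1)))
    (p : Fin (n+1) × Fin (n+1)) (g : S → ℝ) : ℝ :=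
  |matOf S g p.1 p.2 *
    ((matOf S g).submatrix p.1.succAbove p.2.succAbove).det / (matOf S g).det|

lemma measurable_entry {n : ℕ} (S : Finset (Fin n × Fin n)) (i j : Fin n) :
    Measurable fun g : S → ℝ => matOf S g i j := by
  by_cases h : (i, j) ∈ S
  · simp only [matOf, Matrix.of_apply, dif_pos h]
    exact measurable_pi_apply _
  · simp only [matOf, Matrix.of_apply, dif_neg h]
    exact measurable_const

lemma measurable_det_comp {k : Type*} [Fintype k] [DecidableEq k] {α : Type*}
    [MeasurableSpace α] {A : α → Matrix k k ℝ}
    (h : ∀ i j, Measurable fun a => A a i j) :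
    Measurable fun a => (A a).det := by
  simp_rw [Matrix.det_apply']
  apply Finset.measurable_sum
  intro σ _
  apply Measurable.const_mul
  exact Finset.measurable_prod _ (fun i _ => h (σ i) i)

lemma measurable_Fterm {n : ℕ} (S : Finset (Fin (n+1) × Fin (n+1)))
    (p : Fin (n+1) × Fin (n+1)) : Measurable (Fterm S p) := by
  apply Measurable.abs
  apply Measurable.div
  · apply Measurable.mul
    · exact measurable_entry S p.1 p.2
    · exact measurable_det_comp (fun i j => measurable_entry S _ _)
  · exact measurable_det_comp (fun i j => measurable_entry S i j)

lemma per_coord_bound {n : ℕ} (S : Finset (Fin (n+1) × Fin (n+1)))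
    {p : Fin (n+1) × Fin (n+1)} (hp : p ∈ S) {s : ℝ} (hs : 2 ≤ s) :
    gaussS S {g | s ≤ Fterm S p g} ≤ ENNReal.ofReal (1/s) := by
  obtain ⟨i₀, j₀⟩ := p
  show Measure.pi (fun _ : S => gaussianReal 0 1) _ ≤ _
  apply pi_update_bound (gaussianReal 0 1) (⟨(i₀, j₀), hp⟩ : S)
    (measurableSet_le measurable_const (measurable_Fterm S (i₀, j₀)))
  intro f
  set B := matOf S f with hB
  set c := (B.updateRow i₀ (Pi.single j₀ 1)).det with hc
  set d := (B.updateRow i₀ (Function.update (B i₀) j₀ 0)).det with hd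
  set M := (B.submatrix i₀.succAbove j₀.succAbove).det with hM
  have hkey : ∀ x : ℝ, Fterm S (i₀, j₀) (Function.update f ⟨(i₀, j₀), hp⟩ x)
      = |x * M / (x * c + d)| := by
    intro x
    have h1 := matOf_update S i₀ j₀ hp f x
    rw [Fterm, h1]
    have hentry : (B.updateRow i₀ (Function.update (B i₀) j₀ x)) i₀ j₀ = x := by
      rw [Matrix.updateRow_self, Function.update_self]
    have hsubm : ((B.updateRow i₀ (Function.update (B i₀) j₀ x)).submatrix
        i₀.succAbove j₀.succAbove) = B.submatrix i₀.succAbove j₀.succAbove :=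
      Matrix.submatrix_updateRow_succAbove B _ _ i₀
    have hdet := det_affine B i₀ j₀ x
    rw [hentry, hsubm, hdet, ← hc, ← hd, ← hM]
  have hset : {x : ℝ | Function.update f ⟨(i₀, j₀), hp⟩ x ∈
      {g : S → ℝ | s ≤ Fterm S (i₀, j₀) g}} = {x : ℝ | s ≤ |x * M / (x * c + d)|} := by
    ext x
    simp only [Set.mem_setOf_eq, hkey]
  rw [hset]
  exact gauss_event_le hs (abs_coeff_eq B i₀ j₀)

/-- Tail bound for the componentwise condition number of the determinant of a random sparse
matrix: if `det` is not identically zero on `M_S` then for `t ≥ 2|S|`,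
`Prob{Σ_{(i,j)∈S} |a_{ij} det A_{(ij)} / det A| ≥ t} ≤ |S|²/t`; if `det` vanishes identically
on `M_S`, then `c_det = 0` everywhere on `M_S`. -/
theorem cdet_tail_bound_sparse
    (n : ℕ) (S : Finset (Fin (n + 1) × Fin (n + 1))) (t : ℝ)
    (ht : 2 * (S.card : ℝ) ≤ t) :
    ((∃ g : S → ℝ, (matOf S g).det ≠ 0) →
      gaussS S {g | t ≤ ∑ p ∈ S,
          |matOf S g p.1 p.2 *
            ((matOf S g).submatrix p.1.succAbove p.2.succAbove).det / (matOf S g).det|} ≤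
        ENNReal.ofReal ((S.card : ℝ) ^ 2 / t)) ∧
    ((∀ g : S → ℝ, (matOf S g).det = 0) → ∀ g : S → ℝ, cdet (matOf S g) = 0) := by
  constructor
  · intro hex
    have hS : S.Nonempty := by
      by_contra hemp
      rw [Finset.not_nonempty_iff_eq_empty] at hemp
      obtain ⟨g, hg⟩ := hex
      apply hg
      have hzero : matOf S g = 0 := by
        ext i j
        simp [matOf, hemp]
      rw [hzero, Matrix.det_zero]
    have hcardR : (0:ℝ) < S.card := by
      exact_mod_cast Finset.card_pos.2 hS
    have ht0 : (0:ℝ) < t := lt_of_lt_of_le (by linarith) ht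
    set s := t / S.card with hs_def
    have hs : 2 ≤ s := by
      rw [hs_def, le_div_iff₀ hcardR]; linarith
    have hEeq : {g : S → ℝ | t ≤ ∑ p ∈ S,
        |matOf S g p.1 p.2 *
          ((matOf S g).submatrix p.1.succAbove p.2.succAbove).det / (matOf S g).det|}
        = {g : S → ℝ | t ≤ ∑ p ∈ S, Fterm S p g} := rfl
    rw [hEeq]
    have hsub : {g : S → ℝ | t ≤ ∑ p ∈ S, Fterm S p g} ⊆
        ⋃ p ∈ S, {g : S → ℝ | s ≤ Fterm S p g} := by
      intro g hg
      simp only [Set.mem_setOf_eq] at hg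
      by_contra hcon
      simp only [Set.mem_iUnion, Set.mem_setOf_eq, not_exists, not_le] at hcon
      have hlt : ∑ p ∈ S, Fterm S p g < ∑ _p ∈ S, s :=
        Finset.sum_lt_sum_of_nonempty hS (fun p hp => hcon p hp)
      rw [Finset.sum_const, nsmul_eq_mul] at hlt
      have hcs : (S.card : ℝ) * s = t := by
        rw [hs_def]
        field_simp
      linarith
    calc gaussS S {g : S → ℝ | t ≤ ∑ p ∈ S, Fterm S p g}
        ≤ gaussS S (⋃ p ∈ S, {g : S → ℝ | s ≤ Fterm S p g}) := measure_mono hsub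
      _ ≤ ∑ p ∈ S, gaussS S {g : S → ℝ | s ≤ Fterm S p g} :=
          measure_biUnion_finset_le S _
      _ ≤ ∑ _p ∈ S, ENNReal.ofReal (1/s) :=
          Finset.sum_le_sum (fun p hp => per_coord_bound S hp hs)
      _ = (S.card : ℝ≥0∞) * ENNReal.ofReal (1/s) := by
          rw [Finset.sum_const, nsmul_eq_mul]
      _ = ENNReal.ofReal ((S.card : ℝ) * (1/s)) := by
          rw [← ENNReal.ofReal_natCast S.card, ← ENNReal.ofReal_mul (Nat.cast_nonneg _)]
      _ = ENNReal.ofReal ((S.card : ℝ) ^ 2 / t) := by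
          congr 1
          rw [hs_def]
          field_simp
  · intro hz g
    have hfun : (fun δ : ℝ => ⨆ A' ∈ cball (matOf S g) δ,
        ENNReal.ofReal |A'.det - (matOf S g).det| /
          ENNReal.ofReal (δ * |(matOf S g).det|)) = fun _ => (0 : ℝ≥0∞) := by
      funext δ
      apply le_antisymm _ zero_le
      apply iSup₂_le
      intro A' hA'
      have hA'det : A'.det = 0 := by
        have hrepr : A' = matOf S (fun q => A' q.1.1 q.1.2) := by
          ext i j
          simp only [matOf, Matrix.of_apply]
          by_cases h : (i, j) ∈ S
          · rw [dif_pos h]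
          · rw [dif_neg h]
            have h2 := hA' i j
            have h3 : matOf S g i j = 0 := by
              simp [matOf, h]
            rw [h3] at h2
            simp only [sub_zero, abs_zero, mul_zero] at h2
            exact abs_eq_zero.1 (le_antisymm h2 (abs_nonneg _))
        rw [hrepr]
        exact hz _
      rw [hA'det, hz g]
      simp
    rw [cdet, hfun, limsup_const]
end

section
/- For a fixed index pair (i,j) ∈ S, and A a random matrix with independent standard Gaussian entries on positions S (zeros elsewhere) such that det is not identically zero on M_S: for all z ≥ 2, Prob{ |a_{ij} det(A_{(ij)}) / det(A)| ≥ z } ≤ 1/z. -/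
open MeasureTheory ProbabilityTheory Matrix

open Real in
lemma gauss_core (t z : ℝ) (hz : 2 ≤ z) :
    gaussianReal 0 1 {x : ℝ | z ≤ |x / (x + t)|} ≤ ENNReal.ofReal (1 / z) := by
  have hz1 : (1:ℝ) < z := by linarith
  have hzm : (0:ℝ) < z - 1 := by linarith
  have hzp : (0:ℝ) < z + 1 := by linarith
  set d : ℝ := z * |t| / (z + 1) with hd
  have hd0 : 0 ≤ d := by positivity
  set r₁ : ℝ := -(z * t) / (z - 1) with hr₁
  set r₂ : ℝ := -(z * t) / (z + 1) with hr₂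
  set E : Set ℝ := {x : ℝ | z ≤ |x / (x + t)|} with hE
  have hkey : ∀ x ∈ E, d ≤ |x| ∧ min r₁ r₂ ≤ x ∧ x ≤ max r₁ r₂ := by
    intro x hx
    simp only [hE, Set.mem_setOf_eq] at hx
    have hxt : x + t ≠ 0 := by
      intro h
      rw [h, div_zero, abs_zero] at hx
      linarith
    have h1 : z * |x + t| ≤ |x| := by
      rw [abs_div] at hx
      exact (le_div_iff₀ (abs_pos.2 hxt)).1 hx
    have htri : |t| ≤ |x + t| + |x| := by
      have h2 := abs_sub (x + t) x
      have h3 : x + t - x = t := by ring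
      rwa [h3] at h2
    constructor
    · -- d ≤ |x|
      rw [hd, div_le_iff₀ hzp]
      have hxx : 0 ≤ |x + t| := abs_nonneg _
      nlinarith [abs_nonneg x]
    · -- interval membership
      have hsq : z ^ 2 * (x + t) ^ 2 ≤ x ^ 2 := by
        nlinarith [abs_nonneg (x + t), abs_nonneg x, sq_abs x, sq_abs (x + t),
          mul_le_mul h1 h1 (by positivity) (abs_nonneg x)]
      have hprod : (x - r₁) * (x - r₂) ≤ 0 := by
        have hnum : ((z - 1) * x + z * t) * ((z + 1) * x + z * t) ≤ 0 := by nlinarith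
        have heq : (x - r₁) * (x - r₂)
            = ((z - 1) * x + z * t) * ((z + 1) * x + z * t) / ((z - 1) * (z + 1)) := by
          rw [hr₁, hr₂]; field_simp; ring
        rw [heq]
        exact div_nonpos_of_nonpos_of_nonneg hnum (by positivity)
      rcases mul_nonpos_iff.1 hprod with ⟨ha, hb⟩ | ⟨ha, hb⟩
      · exact ⟨le_trans (min_le_left _ _) (by linarith), le_trans (by linarith) (le_max_right _ _)⟩
      · exact ⟨le_trans (min_le_right _ _) (by linarith), le_trans (by linarith) (le_max_left _ _)⟩
  have hEmeas : MeasurableSet E := by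
    apply measurableSet_le measurable_const
    exact (measurable_id.div (measurable_id.add_const t)).abs
  -- measure bound
  have hpdf : ∀ x ∈ E, gaussianPDF 0 1 x ≤ ENNReal.ofReal (gaussianPDFReal 0 1 d) := by
    intro x hx
    apply ENNReal.ofReal_le_ofReal
    unfold gaussianPDFReal
    have hdx : d ≤ |x| := (hkey x hx).1
    have hxx : d ^ 2 ≤ x ^ 2 := by nlinarith [sq_abs x, abs_nonneg x]
    simp only [NNReal.coe_one, mul_one, sub_zero]
    gcongr
  calc gaussianReal 0 1 E = ∫⁻ x in E, gaussianPDF 0 1 x := gaussianReal_apply 0 one_ne_zero E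
    _ ≤ ∫⁻ _ in E, ENNReal.ofReal (gaussianPDFReal 0 1 d) :=
        setLIntegral_mono measurable_const hpdf
    _ = ENNReal.ofReal (gaussianPDFReal 0 1 d) * volume E := setLIntegral_const _ _
    _ ≤ ENNReal.ofReal (gaussianPDFReal 0 1 d) *
        volume (Set.Icc (min r₁ r₂) (max r₁ r₂)) := by
        gcongr
        exact fun x hx => ⟨(hkey x hx).2.1, (hkey x hx).2.2⟩
    _ = ENNReal.ofReal (gaussianPDFReal 0 1 d) * ENNReal.ofReal (max r₁ r₂ - min r₁ r₂) := by
        rw [Real.volume_Icc]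
    _ = ENNReal.ofReal (gaussianPDFReal 0 1 d * (max r₁ r₂ - min r₁ r₂)) := by
        rw [ENNReal.ofReal_mul (gaussianPDFReal_nonneg 0 1 d)]
    _ ≤ ENNReal.ofReal (1 / z) := by
        apply ENNReal.ofReal_le_ofReal
        -- the real inequality
        have hlen : max r₁ r₂ - min r₁ r₂ = 2 * d / (z - 1) := by
          have habs : max r₁ r₂ - min r₁ r₂ = |r₂ - r₁| := by
            rw [max_sub_min_eq_abs, abs_sub_comm]
          have h1 : r₂ - r₁ = 2 * z * t / ((z - 1) * (z + 1)) := by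
            rw [hr₁, hr₂]; field_simp; ring
          rw [habs, h1, abs_div, abs_of_pos (by positivity : (0:ℝ) < (z - 1) * (z + 1)),
            abs_mul, abs_mul, abs_of_pos (by norm_num : (0:ℝ) < 2),
            abs_of_pos (by linarith : (0:ℝ) < z), hd]
          field_simp
        rw [hlen]
        unfold gaussianPDFReal
        have hde : d * Real.exp (-(d - 0) ^ 2 / (2 * 1)) ≤ Real.exp (-(1:ℝ) / 2) := by
          have h1 : d ≤ Real.exp ((d ^ 2 - 1) / 2) := by
            have := Real.add_one_le_exp ((d ^ 2 - 1) / 2)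
            nlinarith [sq_nonneg (d - 1)]
          have h2 : d * Real.exp (-(d - 0) ^ 2 / (2 * 1))
              ≤ Real.exp ((d ^ 2 - 1) / 2) * Real.exp (-(d - 0) ^ 2 / (2 * 1)) :=
            mul_le_mul_of_nonneg_right h1 (Real.exp_nonneg _)
          calc d * Real.exp (-(d - 0) ^ 2 / (2 * 1)) ≤ _ := h2
            _ = Real.exp (-(1:ℝ) / 2) := by
              rw [← Real.exp_add]; ring_nf
        have hsqrt : 4 * Real.exp (-(1:ℝ) / 2) ≤ Real.sqrt (2 * π * 1) := by
          have he1 : (2.7182818283:ℝ) < Real.exp 1 := Real.exp_one_gt_d9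
          have hpi : (3.141592:ℝ) < π := Real.pi_gt_d6
          have h16 : (4 * Real.exp (-(1:ℝ) / 2)) ^ 2 ≤ 2 * π * 1 := by
            have h2 : Real.exp (-(1:ℝ) / 2) ^ 2 = Real.exp (-1) := by
              rw [sq, ← Real.exp_add]; norm_num
            have hepos : (0:ℝ) < Real.exp 1 := Real.exp_pos 1
            rw [mul_pow, h2, Real.exp_neg,
              show (4:ℝ) ^ 2 * (Real.exp 1)⁻¹ = 16 / Real.exp 1 by ring,
              div_le_iff₀ hepos]
            nlinarith
          calc 4 * Real.exp (-(1:ℝ) / 2)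
              = Real.sqrt ((4 * Real.exp (-(1:ℝ) / 2)) ^ 2) := by
                rw [Real.sqrt_sq (by positivity)]
            _ ≤ Real.sqrt (2 * π * 1) := Real.sqrt_le_sqrt h16
        -- combine
        have hS : (0:ℝ) < Real.sqrt (2 * π * 1) := by positivity
        have hN : (0:ℝ) ≤ Real.exp (-(d - 0) ^ 2 / (2 * 1)) := Real.exp_nonneg _
        rw [NNReal.coe_one]
        calc (Real.sqrt (2 * π * 1))⁻¹ * Real.exp (-(d - 0) ^ 2 / (2 * 1)) * (2 * d / (z - 1))
            = (d * Real.exp (-(d - 0) ^ 2 / (2 * 1))) * (2 / ((z - 1) * Real.sqrt (2 * π * 1))) := by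
              field_simp
          _ ≤ Real.exp (-(1:ℝ)/2) * (2 / ((z - 1) * Real.sqrt (2 * π * 1))) := by
              apply mul_le_mul_of_nonneg_right hde
              positivity
          _ ≤ 1 / z := by
              have hE0 : (0:ℝ) < Real.exp (-(1:ℝ) / 2) := Real.exp_pos _
              have hS0 : (0:ℝ) < Real.sqrt (2 * π * 1) := by positivity
              rw [show Real.exp (-(1:ℝ) / 2) * (2 / ((z - 1) * Real.sqrt (2 * π * 1)))
                  = 2 * Real.exp (-(1:ℝ) / 2) / ((z - 1) * Real.sqrt (2 * π * 1)) by ring,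
                div_le_div_iff₀ (by positivity) (by linarith : (0:ℝ) < z)]
              nlinarith [mul_le_mul_of_nonneg_left hsqrt
                (by linarith : (0:ℝ) ≤ z - 1), hE0]

open Real in
lemma gauss_affine (c b s z : ℝ) (hs : |s| = 1) (hz : 2 ≤ z) :
    gaussianReal 0 1 {x : ℝ | z ≤ |x * c / (x * (s * c) + b)|} ≤ ENNReal.ofReal (1 / z) := by
  by_cases hc : c = 0
  · have hempty : {x : ℝ | z ≤ |x * c / (x * (s * c) + b)|} = ∅ := by
      ext x
      simp only [Set.mem_setOf_eq, Set.mem_empty_iff_false, iff_false, not_le, hc]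
      simp only [mul_zero, zero_div, abs_zero]
      nlinarith [abs_nonneg (x * 0 / (x * (s * 0) + b))]
    rw [hempty]
    simp
  · have hs0 : s ≠ 0 := fun h => by simp [h] at hs
    have hsc : s * c ≠ 0 := mul_ne_zero hs0 hc
    have hset : {x : ℝ | z ≤ |x * c / (x * (s * c) + b)|}
        = {x : ℝ | z ≤ |x / (x + b / (s * c))|} := by
      ext x
      simp only [Set.mem_setOf_eq]
      have hden : x * (s * c) + b = (x + b / (s * c)) * (s * c) := by field_simp
      rw [hden, abs_div, abs_div, abs_mul x c, abs_mul (x + b / (s * c)) (s * c),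
        abs_mul s c, hs, one_mul, mul_div_mul_right _ _ (abs_ne_zero.2 hc)]
    rw [hset]
    exact gauss_core _ _ hz

lemma measurable_matOf {n : ℕ} (S : Finset (Fin n × Fin n)) (a b : Fin n) :
    Measurable fun g : S → ℝ => matOf S g a b := by
  unfold matOf
  simp only [Matrix.of_apply]
  by_cases h : (a, b) ∈ S
  · simpa only [dif_pos h] using measurable_pi_apply (⟨(a, b), h⟩ : S)
  · simp only [dif_neg h]
    exact measurable_const

lemma measurable_det_comp_s11 {α : Type*} [MeasurableSpace α] {m : ℕ}
    {f : α → Matrix (Fin m) (Fin m) ℝ} (hf : ∀ a b, Measurable fun x => f x a b) :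
    Measurable fun x => (f x).det := by
  simp_rw [Matrix.det_apply']
  apply Finset.measurable_sum
  intro σ _
  apply Measurable.const_mul
  exact Finset.measurable_prod _ fun k _ => hf _ _

/-- For a fixed `(i,j) ∈ S` and a random sparse Gaussian matrix (with `det` not identically
zero on `M_S`): for all `z ≥ 2`, `Prob{|a_{ij} det A_{(ij)} / det A| ≥ z} ≤ 1/z`. -/
theorem single_cofactor_ratio_tail_bound
    (n : ℕ) (S : Finset (Fin (n + 1) × Fin (n + 1)))
    (hS : ∃ g : S → ℝ, (matOf S g).det ≠ 0)
    (i j : Fin (n + 1)) (hij : (i, j) ∈ S) (z : ℝ) (hz : 2 ≤ z) :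
    gaussS S {g | z ≤
        |matOf S g i j *
          ((matOf S g).submatrix i.succAbove j.succAbove).det / (matOf S g).det|} ≤
      ENNReal.ofReal (1 / z) := by
  classical
  set k₀ : {k : Fin (n + 1) × Fin (n + 1) // k ∈ S} := ⟨(i, j), hij⟩ with hk₀
  set E : Set (S → ℝ) := {g | z ≤
      |matOf S g i j * ((matOf S g).submatrix i.succAbove j.succAbove).det
        / (matOf S g).det|} with hEdef
  have hmeasent : ∀ a b, Measurable fun g : S → ℝ => matOf S g a b := measurable_matOf S
  have hE : MeasurableSet E := by
    apply measurableSet_le measurable_const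
    apply Measurable.abs
    apply Measurable.div
    · exact (hmeasent i j).mul (measurable_det_comp_s11 fun a b =>
        hmeasent (i.succAbove a) (j.succAbove b))
    · exact measurable_det_comp_s11 hmeasent
  set p : (↥S) → Prop := fun k => k = k₀ with hp
  set e₁ := MeasurableEquiv.piEquivPiSubtypeProd (fun _ : ↥S => ℝ) p with he₁
  set e₂ := MeasurableEquiv.funUnique {k : ↥S // p k} ℝ with he₂
  set e := e₁.trans (e₂.prodCongr (MeasurableEquiv.refl ({k : ↥S // ¬ p k} → ℝ))) with he
  have h₁ := measurePreserving_piEquivPiSubtypeProd (fun _ : ↥S => gaussianReal 0 1) p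
  have h₁' : MeasurePreserving e₁ (gaussS S)
      ((Measure.pi fun _ : {k : ↥S // p k} => gaussianReal 0 1).prod
        (Measure.pi fun _ : {k : ↥S // ¬ p k} => gaussianReal 0 1)) := by
    convert h₁ using 2
    congr 1
    convert rfl
  have hePres : MeasurePreserving e (gaussS S)
      ((gaussianReal 0 1).prod (Measure.pi fun _ : {k : ↥S // ¬ p k} => gaussianReal 0 1)) :=
    (MeasurePreserving.prod (measurePreserving_funUnique (gaussianReal 0 1) _)
      (MeasurePreserving.id _)).comp h₁'
  set ν := (Measure.pi fun _ : {k : ↥S // ¬ p k} => gaussianReal 0 1) with hν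
  have hEs : MeasurableSet (e.symm ⁻¹' E) := e.symm.measurable hE
  have hmain : gaussS S E = ((gaussianReal 0 1).prod ν) (e.symm ⁻¹' E) := by
    have h3 := hePres.measure_preimage_equiv (e.symm ⁻¹' E)
    have h4 : e ⁻¹' (e.symm ⁻¹' E) = E := by
      ext g
      simp
    rw [h4] at h3
    exact h3
  have hesymm : ∀ (x : ℝ) (y : {k : ↥S // ¬ p k} → ℝ) (k : ↥S),
      e.symm (x, y) k = if h : p k then x else y ⟨k, h⟩ := by
    intro x y k
    rfl
  have hcoord : ∀ (x : ℝ) (y : {k : ↥S // ¬ p k} → ℝ), matOf S (e.symm (x, y)) i j = x := by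
    intro x y
    unfold matOf
    simp only [Matrix.of_apply, dif_pos hij]
    rw [hesymm, dif_pos (show p ⟨(i, j), hij⟩ from rfl)]
  have hother : ∀ (x : ℝ) (y : {k : ↥S // ¬ p k} → ℝ) (a b : Fin (n + 1)), (a, b) ≠ (i, j) →
      matOf S (e.symm (x, y)) a b = matOf S (e.symm (0, y)) a b := by
    intro x y a b hab
    unfold matOf
    simp only [Matrix.of_apply]
    by_cases h : (a, b) ∈ S
    · rw [dif_pos h, dif_pos h, hesymm, hesymm]
      have hk : ¬ p (⟨(a, b), h⟩ : ↥S) := by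
        simp only [hp]
        intro hcon
        exact hab (congrArg Subtype.val hcon)
      rw [dif_neg hk, dif_neg hk]
    · rw [dif_neg h, dif_neg h]
  have hsub : ∀ (x : ℝ) (y : {k : ↥S // ¬ p k} → ℝ) (l : Fin (n + 1)),
      (matOf S (e.symm (x, y))).submatrix i.succAbove l.succAbove
        = (matOf S (e.symm (0, y))).submatrix i.succAbove l.succAbove := by
    intro x y l
    ext a b
    simp only [Matrix.submatrix_apply]
    exact hother x y _ _ (fun hcon => Fin.succAbove_ne i a (congrArg Prod.fst hcon))
  have hdet : ∀ (x : ℝ) (y : {k : ↥S // ¬ p k} → ℝ), (matOf S (e.symm (x, y))).det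
      = x * ((-1 : ℝ) ^ ((i : ℕ) + (j : ℕ)) *
          ((matOf S (e.symm (0, y))).submatrix i.succAbove j.succAbove).det)
        + (matOf S (e.symm (0, y))).det := by
    intro x y
    rw [Matrix.det_succ_row (matOf S (e.symm (x, y))) i,
        Matrix.det_succ_row (matOf S (e.symm (0, y))) i,
        Finset.sum_eq_sum_sdiff_singleton_add (Finset.mem_univ j),
        Finset.sum_eq_sum_sdiff_singleton_add (Finset.mem_univ j)]
    have hterms : ∀ l ∈ Finset.univ \ {j},
        (-1 : ℝ) ^ ((i : ℕ) + (l : ℕ)) * matOf S (e.symm (x, y)) i l *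
            ((matOf S (e.symm (x, y))).submatrix i.succAbove l.succAbove).det
          = (-1 : ℝ) ^ ((i : ℕ) + (l : ℕ)) * matOf S (e.symm (0, y)) i l *
            ((matOf S (e.symm (0, y))).submatrix i.succAbove l.succAbove).det := by
      intro l hl
      have hlj : l ≠ j := by simpa using (Finset.mem_sdiff.1 hl).2
      rw [hsub x y l, hother x y i l (fun hcon => hlj (congrArg Prod.snd hcon))]
    rw [Finset.sum_congr rfl hterms, hcoord x y, hcoord 0 y, hsub x y j]
    ring
  have hslice : ∀ y : {k : ↥S // ¬ p k} → ℝ, ((fun x => (x, y)) ⁻¹' (e.symm ⁻¹' E))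
      = {x : ℝ | z ≤ |x * ((matOf S (e.symm (0, y))).submatrix i.succAbove j.succAbove).det /
          (x * ((-1 : ℝ) ^ ((i : ℕ) + (j : ℕ)) *
            ((matOf S (e.symm (0, y))).submatrix i.succAbove j.succAbove).det)
            + (matOf S (e.symm (0, y))).det)|} := by
    intro y
    ext x
    simp only [Set.mem_preimage, hEdef, Set.mem_setOf_eq]
    rw [hcoord x y, hsub x y j, hdet x y]
  rw [hmain, Measure.prod_apply_symm hEs]
  calc ∫⁻ y, gaussianReal 0 1 ((fun x => (x, y)) ⁻¹' (e.symm ⁻¹' E)) ∂ν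
      ≤ ∫⁻ _, ENNReal.ofReal (1 / z) ∂ν := by
        apply lintegral_mono
        intro y
        dsimp only
        rw [hslice y]
        exact gauss_affine _ _ _ z (by simp) hz
    _ = ENNReal.ofReal (1 / z) := by
        have : IsProbabilityMeasure ν := by infer_instance
        simp [lintegral_const]
end

section
/- Let F : D → ℝ^q be continuous, a ∈ D with all components of F(a) nonzero, and let ‖·‖ be a monotonic norm on ℝ^q (i.e., |u_i| ≤ |v_i| for all i implies ‖u‖ ≤ ‖v‖). Then the mixed condition number m(F,a) is at most the componentwise condition number c(F,a): m(F,a) = lim_{δ→0} sup_{x∈B(a,δ), x≠a} (‖F(x)−F(a)‖/‖F(a)‖)/d(x,a) ≤ lim_{δ→0} sup_{x∈B(a,δ), x≠a} d(F(x),F(a))/d(x,a) = c(F,a). -/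
open Filter Set
open scoped ENNReal Topology

/-- The componentwise relative "distance" `d(u,v) = max_i |u_i − v_i|/|v_i|`, interpreted as
`0` when `u_i = v_i` and as `∞` when `v_i = 0 ≠ u_i`. -/
noncomputable def dRel {p : ℕ} (u v : Fin p → ℝ) : ℝ≥0∞ :=
  ⨆ i, if u i = v i then 0
    else if v i = 0 then ⊤ else ENNReal.ofReal (|u i - v i| / |v i|)

/-- For a continuous map `F : D → ℝ^q`, a point `a` with all components of `F a` nonzero,
and a monotonic norm `N` on `ℝ^q`, the mixed condition number `m(F,a)` is bounded by the
componentwise condition number `c(F,a)`. -/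
theorem mixed_le_componentwise_condition_number
    (p q : ℕ) (D : Set (Fin p → ℝ)) (F : (Fin p → ℝ) → (Fin q → ℝ))
    (hF : ContinuousOn F D) (a : Fin p → ℝ) (ha : a ∈ D) (haF : ∀ j, F a j ≠ 0)
    (N : (Fin q → ℝ) → ℝ)
    (hmono : ∀ u v : Fin q → ℝ, (∀ j, |u j| ≤ |v j|) → N u ≤ N v)
    (hhomog : ∀ (r : ℝ) (u : Fin q → ℝ), N (r • u) = |r| * N u) :
    limsup
        (fun δ : ℝ => ⨆ x ∈ {x ∈ D | dRel x a ≤ ENNReal.ofReal δ ∧ x ≠ a},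
          ENNReal.ofReal (N (F x - F a) / N (F a)) / dRel x a)
        (𝓝[>] (0 : ℝ)) ≤
      limsup
        (fun δ : ℝ => ⨆ x ∈ {x ∈ D | dRel x a ≤ ENNReal.ofReal δ ∧ x ≠ a},
          dRel (F x) (F a) / dRel x a)
        (𝓝[>] (0 : ℝ)) := by
  have hNzero : N 0 = 0 := by
    have := hhomog 0 0
    simpa using this
  -- key pointwise bound
  have key : ∀ x, ENNReal.ofReal (N (F x - F a) / N (F a)) ≤ dRel (F x) (F a) := by
    intro x
    by_cases hc : dRel (F x) (F a) = ⊤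
    · simp [hc]
    · set c : ℝ := (dRel (F x) (F a)).toReal with hcdef
      have hc0 : 0 ≤ c := ENNReal.toReal_nonneg
      have hcomp : ∀ j, |(F x - F a) j| ≤ c * |F a j| := by
        intro j
        have hterm : (if F x j = F a j then 0
            else if F a j = 0 then ⊤ else ENNReal.ofReal (|F x j - F a j| / |F a j|))
            ≤ dRel (F x) (F a) := by unfold dRel; exact le_iSup (fun i => if F x i = F a i then (0:ℝ≥0∞) else if F a i = 0 then ⊤ else ENNReal.ofReal (|F x i - F a i| / |F a i|)) j
        by_cases he : F x j = F a j
        · simp [Pi.sub_apply, he]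
          positivity
        · rw [if_neg he, if_neg (haF j)] at hterm
          have := (ENNReal.ofReal_le_iff_le_toReal hc).mp hterm
          have habs : 0 < |F a j| := abs_pos.mpr (haF j)
          have : |F x j - F a j| ≤ c * |F a j| := by
            rw [div_le_iff₀ habs] at this
            linarith [this]
          simpa [Pi.sub_apply] using this
      have hN1 : N (F x - F a) ≤ c * N (F a) := by
        have := hmono (F x - F a) (c • F a) (by
          intro j
          have : |(c • F a) j| = c * |F a j| := by
            simp [Pi.smul_apply, abs_mul, abs_of_nonneg hc0]
          rw [this]; exact hcomp j)
        rwa [hhomog, abs_of_nonneg hc0] at this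
      have hdiv : N (F x - F a) / N (F a) ≤ c := by
        rcases eq_or_lt_of_le (by
            have := hmono 0 (F a) (by intro j; simp)
            simpa [hNzero] using this : (0:ℝ) ≤ N (F a)) with h | h
        · simp [← h, hc0]
        · rw [div_le_iff₀ h]; exact hN1
      calc ENNReal.ofReal (N (F x - F a) / N (F a)) ≤ ENNReal.ofReal c :=
            ENNReal.ofReal_le_ofReal hdiv
        _ = dRel (F x) (F a) := ENNReal.ofReal_toReal hc
  refine limsup_le_limsup (Eventually.of_forall fun δ => ?_)
  exact iSup₂_mono fun x _ => ENNReal.div_le_div_right (key x) _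
end

section
/- For a nonsingular n×n real matrix A and indices k, ℓ ∈ [n], the componentwise condition number of the (k,ℓ) entry of the matrix inverse satisfies c†_{kℓ}(A) ≤ c_det(A) + c_det(A_{(ℓk)}), where c†_{kℓ}(A) = lim_{δ→0} sup_{A'∈B(A,δ)} |γ'_{kℓ} − γ_{kℓ}|/(δ|γ_{kℓ}|) when γ_{kℓ} ≠ 0. -/
open Matrix Filter Set
open scoped ENNReal Topology

/-- The componentwise condition number of the `(k,ℓ)` entry of matrix inversion at `A`:
`lim_{δ→0⁺} sup_{A' ∈ B(A,δ)} |γ'_{kℓ} − γ_{kℓ}| / (δ |γ_{kℓ}|)`. -/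
noncomputable def cinv {m : ℕ} (A : Matrix (Fin m) (Fin m) ℝ) (k l : Fin m) : ℝ≥0∞ :=
  limsup
    (fun δ : ℝ => ⨆ A' ∈ cball A δ,
      ENNReal.ofReal |A'⁻¹ k l - A⁻¹ k l| / ENNReal.ofReal (δ * |A⁻¹ k l|))
    (𝓝[>] (0 : ℝ))

section Aux

lemma prod_pert {ι : Type*} (s : Finset ι) (x y : ι → ℝ) (δ : ℝ) (hδ : 0 ≤ δ)
    (h : ∀ i ∈ s, |x i - y i| ≤ δ * |y i|) :
    |∏ i ∈ s, x i - ∏ i ∈ s, y i| ≤ ((1 + δ) ^ s.card - 1) * ∏ i ∈ s, |y i| := by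
  classical
  induction s using Finset.induction with
  | empty => simp
  | @insert a s ha ih =>
    have hx := h a (Finset.mem_insert_self a s)
    have ih' := ih (fun i hi => h i (Finset.mem_insert_of_mem hi))
    rw [Finset.prod_insert ha, Finset.prod_insert ha, Finset.prod_insert ha,
      Finset.card_insert_of_notMem ha]
    set X := ∏ i ∈ s, x i
    set Y := ∏ i ∈ s, y i
    set Z := ∏ i ∈ s, |y i| with hZ
    have hZ0 : 0 ≤ Z := Finset.prod_nonneg (fun i _ => abs_nonneg _)
    have hYZ : |Y| = Z := by rw [hZ, ← Finset.abs_prod]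
    have hXb : |X| ≤ (1 + δ) ^ s.card * Z := by
      calc |X| ≤ |Y| + |X - Y| := by
            have := abs_sub_abs_le_abs_sub X Y; linarith [abs_nonneg (X - Y)]
        _ ≤ Z + ((1 + δ) ^ s.card - 1) * Z := by rw [hYZ]; linarith
        _ = (1 + δ) ^ s.card * Z := by ring
    have key : |x a * X - y a * Y| ≤ |x a - y a| * |X| + |y a| * |X - Y| := by
      calc |x a * X - y a * Y| = |(x a - y a) * X + y a * (X - Y)| := by ring_nf
        _ ≤ |(x a - y a) * X| + |y a * (X - Y)| := abs_add_le _ _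
        _ = |x a - y a| * |X| + |y a| * |X - Y| := by rw [abs_mul, abs_mul]
    have h1 : |x a - y a| * |X| ≤ δ * |y a| * ((1 + δ) ^ s.card * Z) := by
      apply mul_le_mul hx hXb (abs_nonneg _) (by positivity)
    have h2 : |y a| * |X - Y| ≤ |y a| * (((1 + δ) ^ s.card - 1) * Z) :=
      mul_le_mul_of_nonneg_left ih' (abs_nonneg _)
    have hp : (1:ℝ) ≤ (1 + δ) ^ s.card := one_le_pow₀ (by linarith)
    calc |x a * X - y a * Y| ≤ δ * |y a| * ((1 + δ) ^ s.card * Z)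
          + |y a| * (((1 + δ) ^ s.card - 1) * Z) := by linarith
      _ = ((1 + δ) ^ (s.card + 1) - 1) * (|y a| * Z) := by ring

/-- Sum over permutations of products of absolute values of entries. -/
noncomputable def pp {m : ℕ} (A : Matrix (Fin m) (Fin m) ℝ) : ℝ :=
  ∑ σ : Equiv.Perm (Fin m), ∏ i, |A (σ i) i|

lemma pp_nonneg {m : ℕ} (A : Matrix (Fin m) (Fin m) ℝ) : 0 ≤ pp A :=
  Finset.sum_nonneg fun _ _ => Finset.prod_nonneg fun _ _ => abs_nonneg _

lemma abs_det_le_pp {m : ℕ} (A : Matrix (Fin m) (Fin m) ℝ) : |A.det| ≤ pp A := by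
  rw [Matrix.det_apply]
  refine (Finset.abs_sum_le_sum_abs _ _).trans (Finset.sum_le_sum fun σ _ => ?_)
  rw [show (Equiv.Perm.sign σ • ∏ i, A (σ i) i) = ((Equiv.Perm.sign σ : ℤ) : ℝ) * ∏ i, A (σ i) i
    from by simp [Units.smul_def, zsmul_eq_mul]]
  rw [abs_mul, Finset.abs_prod]
  rcases Int.units_eq_one_or (Equiv.Perm.sign σ) with h | h <;> simp [h]

lemma det_pert {m : ℕ} {A A' : Matrix (Fin m) (Fin m) ℝ} {δ : ℝ} (hδ0 : 0 < δ) (hδ1 : δ ≤ 1)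
    (hA' : A' ∈ cball A δ) :
    |A'.det - A.det| ≤ δ * ((m * 2 ^ m : ℝ) * pp A) := by
  have hgeom : (1 + δ) ^ m - 1 ≤ δ * (m * 2 ^ m) := by
    have h1 : (∑ i ∈ Finset.range m, (1 + δ) ^ i) * ((1 + δ) - 1) = (1 + δ) ^ m - 1 :=
      geom_sum_mul (1 + δ) m
    have h2 : (∑ i ∈ Finset.range m, (1 + δ) ^ i) ≤ (m : ℝ) * 2 ^ m := by
      calc (∑ i ∈ Finset.range m, (1 + δ) ^ i) ≤ ∑ _i ∈ Finset.range m, (2:ℝ) ^ m := by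
            refine Finset.sum_le_sum fun i hi => ?_
            calc (1 + δ) ^ i ≤ 2 ^ i := pow_le_pow_left₀ (by linarith) (by linarith) i
              _ ≤ 2 ^ m := pow_le_pow_right₀ (by norm_num) (Finset.mem_range.1 hi).le
        _ = (m : ℝ) * 2 ^ m := by simp [mul_comm]
    have h3 : (1 + δ) ^ m - 1 = (∑ i ∈ Finset.range m, (1 + δ) ^ i) * δ := by
      rw [← h1]; ring
    rw [h3]
    calc (∑ i ∈ Finset.range m, (1 + δ) ^ i) * δ ≤ ((m : ℝ) * 2 ^ m) * δ :=
          mul_le_mul_of_nonneg_right h2 hδ0.le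
      _ = δ * (m * 2 ^ m) := by ring
  have key : |A'.det - A.det| ≤ ((1 + δ) ^ m - 1) * pp A := by
    rw [Matrix.det_apply, Matrix.det_apply, ← Finset.sum_sub_distrib]
    refine (Finset.abs_sum_le_sum_abs _ _).trans ?_
    rw [pp, Finset.mul_sum]
    refine Finset.sum_le_sum fun σ _ => ?_
    have hsmul : ∀ x : ℝ, |Equiv.Perm.sign σ • x| = |x| := by
      intro x
      rcases Int.units_eq_one_or (Equiv.Perm.sign σ) with h | h <;>
        simp [h, Units.smul_def, zsmul_eq_mul]
    rw [← smul_sub, hsmul]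
    have := prod_pert Finset.univ (fun i => A' (σ i) i) (fun i => A (σ i) i) δ hδ0.le
      (fun i _ => hA' (σ i) i)
    simpa using this
  calc |A'.det - A.det| ≤ ((1 + δ) ^ m - 1) * pp A := key
    _ ≤ (δ * (m * 2 ^ m)) * pp A := mul_le_mul_of_nonneg_right hgeom (pp_nonneg A)
    _ = δ * ((m * 2 ^ m : ℝ) * pp A) := by ring

lemma inv_entry {n : ℕ} (A : Matrix (Fin (n + 1)) (Fin (n + 1)) ℝ) (k l : Fin (n + 1)) :
    A⁻¹ k l = (-1 : ℝ) ^ (l + k : ℕ) * (A.submatrix l.succAbove k.succAbove).det / A.det := by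
  rw [Matrix.inv_def, Matrix.smul_apply, Matrix.adjugate_fin_succ_eq_det_submatrix,
    Ring.inverse_eq_inv]
  field_simp
  rw [smul_eq_mul]; ring

lemma core_ineq (d d' m m' δ c : ℝ) (hd : d ≠ 0) (hm : m ≠ 0) (hd' : d' ≠ 0)
    (hc : |d| ≤ c * |d'|) (hδ : 0 < δ) :
    |m' / d' - m / d| / (δ * |m / d|) ≤ c * (|d' - d| / (δ * |d|) + |m' - m| / (δ * |m|)) := by
  have hD : (0:ℝ) < |d| := abs_pos.2 hd
  have hD' : (0:ℝ) < |d'| := abs_pos.2 hd'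
  have hM : (0:ℝ) < |m| := abs_pos.2 hm
  have key : |m' / d' - m / d| ≤ (|m' - m| * |d| + |m| * |d' - d|) / (|d'| * |d|) := by
    have e : m' / d' - m / d = ((m' - m) * d - m * (d' - d)) / (d' * d) := by
      field_simp; ring
    rw [e, abs_div, abs_mul]
    gcongr
    calc |(m' - m) * d - m * (d' - d)| ≤ |(m' - m) * d| + |m * (d' - d)| := abs_sub _ _
      _ = |m' - m| * |d| + |m| * |d' - d| := by rw [abs_mul, abs_mul]
  rw [abs_div]
  have lhs_eq : |m' / d' - m / d| / (δ * (|m| / |d|))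
      = |m' / d' - m / d| * |d| / (δ * |m|) := by
    field_simp
  rw [lhs_eq]
  calc |m' / d' - m / d| * |d| / (δ * |m|)
      ≤ ((|m' - m| * |d| + |m| * |d' - d|) / (|d'| * |d|)) * |d| / (δ * |m|) := by gcongr
    _ = (|d| / |d'|) * (|d' - d| / (δ * |d|) + |m' - m| / (δ * |m|)) := by
        field_simp; ring
    _ ≤ c * (|d' - d| / (δ * |d|) + |m' - m| / (δ * |m|)) := by
        apply mul_le_mul_of_nonneg_right ((div_le_iff₀ hD').2 hc)
        positivity

lemma cball_submatrix {m p : ℕ} {A A' : Matrix (Fin m) (Fin m) ℝ} {δ : ℝ}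
    (h : A' ∈ cball A δ) (f g : Fin p → Fin m) :
    A'.submatrix f g ∈ cball (A.submatrix f g) δ :=
  fun i j => h (f i) (g j)

end Aux

set_option maxHeartbeats 1600000 in
/-- For a nonsingular matrix `A` and indices `k, ℓ`,
`c†_{kℓ}(A) ≤ c_det(A) + c_det(A_{(ℓk)})`. -/
theorem cinv_le_cdet_add_cdet_minor
    (n : ℕ) (A : Matrix (Fin (n + 1)) (Fin (n + 1)) ℝ) (hA : IsUnit A.det)
    (k l : Fin (n + 1)) :
    cinv A k l ≤ cdet A + cdet (A.submatrix l.succAbove k.succAbove) := by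
  classical
  set B := A.submatrix l.succAbove k.succAbove with hB
  set d : ℝ := A.det with hd_def
  set m : ℝ := B.det with hm_def
  have hd : d ≠ 0 := hA.ne_zero
  have hD : 0 < |d| := abs_pos.2 hd
  set s : ℝ := (-1 : ℝ) ^ (l + k : ℕ) with hs_def
  have hs : |s| = 1 := by rw [hs_def, abs_pow, abs_neg, abs_one, one_pow]
  have hγ : A⁻¹ k l = s * m / d := inv_entry A k l
  have hγ' : ∀ A' : Matrix (Fin (n+1)) (Fin (n+1)) ℝ,
      A'⁻¹ k l = s * (A'.submatrix l.succAbove k.succAbove).det / A'.det :=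
    fun A' => inv_entry A' k l
  set F : ℝ → ℝ≥0∞ := fun δ => ⨆ A' ∈ cball A δ,
      ENNReal.ofReal |A'⁻¹ k l - A⁻¹ k l| / ENNReal.ofReal (δ * |A⁻¹ k l|) with hF
  set G : ℝ → ℝ≥0∞ := fun δ => ⨆ A' ∈ cball A δ,
      ENNReal.ofReal |A'.det - A.det| / ENNReal.ofReal (δ * |A.det|) with hG
  set H : ℝ → ℝ≥0∞ := fun δ => ⨆ B' ∈ cball B δ,
      ENNReal.ofReal |B'.det - B.det| / ENNReal.ofReal (δ * |B.det|) with hH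
  have hcinv : cinv A k l = limsup F (𝓝[>] (0:ℝ)) := rfl
  have hcdetA : cdet A = limsup G (𝓝[>] (0:ℝ)) := rfl
  have hcdetB : cdet B = limsup H (𝓝[>] (0:ℝ)) := rfl
  by_cases hm : m = 0
  · -- Degenerate case: the minor has zero determinant.
    have hFH : ∀ δ : ℝ, F δ ≤ H δ := by
      intro δ
      refine iSup₂_le fun A' hA' => ?_
      set m' : ℝ := (A'.submatrix l.succAbove k.succAbove).det with hm'
      by_cases hm'0 : m' = 0
      · have h1 : A'⁻¹ k l = 0 := by rw [hγ', ← hm', hm'0]; simp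
        have h2 : A⁻¹ k l = 0 := by rw [hγ, hm]; simp
        rw [h1, h2]
        simp
      · have hmem : A'.submatrix l.succAbove k.succAbove ∈ cball B δ :=
          cball_submatrix hA' _ _
        have htop : H δ = ⊤ := by
          refine top_le_iff.1 ?_
          refine le_trans ?_ (le_iSup₂ (f := fun B' (_ : B' ∈ cball B δ) =>
            ENNReal.ofReal |B'.det - B.det| / ENNReal.ofReal (δ * |B.det|))
            (A'.submatrix l.succAbove k.succAbove) hmem)
          rw [← hm_def, ← hm', hm]
          rw [abs_zero, mul_zero, ENNReal.ofReal_zero, ENNReal.div_zero]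
          simp [ENNReal.ofReal_pos, abs_pos, sub_zero, hm'0]
        rw [htop]; exact le_top
    calc cinv A k l ≤ limsup H (𝓝[>] (0:ℝ)) := by
          rw [hcinv]; exact limsup_le_limsup (Eventually.of_forall hFH)
      _ = cdet B := hcdetB.symm
      _ ≤ cdet A + cdet B := le_add_self
  · -- Main case: the minor has nonzero determinant.
    have hM : 0 < |m| := abs_pos.2 hm
    have hppA : 0 < pp A := lt_of_lt_of_le hD (abs_det_le_pp A)
    set CA : ℝ := ((n + 1 : ℕ) * 2 ^ (n + 1 : ℕ) : ℝ) * pp A with hCA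
    have hCA0 : 0 < CA := by
      rw [hCA]; positivity
    -- finiteness of both condition numbers
    have hGbound : ∀ᶠ δ in 𝓝[>] (0:ℝ), G δ ≤ ENNReal.ofReal (CA / |d|) := by
      filter_upwards [Ioc_mem_nhdsGT (one_pos : (0:ℝ) < 1)] with δ hδ
      refine iSup₂_le fun A' hA' => ?_
      have hdet := det_pert hδ.1 hδ.2 hA'
      calc ENNReal.ofReal |A'.det - A.det| / ENNReal.ofReal (δ * |A.det|)
          ≤ ENNReal.ofReal (δ * CA) / ENNReal.ofReal (δ * |d|) :=
            ENNReal.div_le_div_right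
              (ENNReal.ofReal_le_ofReal (by rw [← hCA] at hdet; exact hdet)) _
        _ = ENNReal.ofReal (δ * CA / (δ * |d|)) :=
            (ENNReal.ofReal_div_of_pos (mul_pos hδ.1 hD)).symm
        _ = ENNReal.ofReal (CA / |d|) := by rw [mul_div_mul_left _ _ (ne_of_gt hδ.1)]
    set CB : ℝ := ((n : ℕ) * 2 ^ (n : ℕ) : ℝ) * pp B with hCB
    have hHbound : ∀ᶠ δ in 𝓝[>] (0:ℝ), H δ ≤ ENNReal.ofReal (CB / |m|) := by
      filter_upwards [Ioc_mem_nhdsGT (one_pos : (0:ℝ) < 1)] with δ hδ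
      refine iSup₂_le fun B' hB' => ?_
      have hdet := det_pert hδ.1 hδ.2 hB'
      calc ENNReal.ofReal |B'.det - B.det| / ENNReal.ofReal (δ * |B.det|)
          ≤ ENNReal.ofReal (δ * CB) / ENNReal.ofReal (δ * |m|) :=
            ENNReal.div_le_div_right
              (ENNReal.ofReal_le_ofReal (by rw [← hCB] at hdet; exact hdet)) _
        _ = ENNReal.ofReal (δ * CB / (δ * |m|)) :=
            (ENNReal.ofReal_div_of_pos (mul_pos hδ.1 hM)).symm
        _ = ENNReal.ofReal (CB / |m|) := by rw [mul_div_mul_left _ _ (ne_of_gt hδ.1)]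
    have hX : cdet A ≠ ⊤ := by
      rw [hcdetA]
      exact ne_top_of_le_ne_top ENNReal.ofReal_ne_top (limsup_le_of_le (h := hGbound))
    have hY : cdet B ≠ ⊤ := by
      rw [hcdetB]
      exact ne_top_of_le_ne_top ENNReal.ofReal_ne_top (limsup_le_of_le (h := hHbound))
    -- main estimate
    refine le_of_forall_gt_imp_ge_of_dense fun z hz => ?_
    rcases eq_or_ne z ⊤ with rfl | hztop
    · exact le_top
    obtain ⟨z', hz1, hz2⟩ := exists_between hz
    have hz'top : z' ≠ ⊤ := (hz2.trans_le le_top).ne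
    -- eventually G + H < z'
    set t : ℝ≥0∞ := z' - (cdet A + cdet B) with ht_def
    have ht : t ≠ 0 := by
      rw [ht_def]
      exact (tsub_pos_of_lt hz1).ne'
    have ht2 : t / 2 ≠ 0 := by
      simp [ENNReal.div_eq_zero_iff, ht]
    have hXY : cdet A + cdet B ≠ ⊤ := by
      simp [ENNReal.add_eq_top, hX, hY]
    have hGev : ∀ᶠ δ in 𝓝[>] (0:ℝ), G δ < cdet A + t / 2 :=
      eventually_lt_of_limsup_lt (by rw [← hcdetA]; exact ENNReal.lt_add_right hX ht2)
    have hHev : ∀ᶠ δ in 𝓝[>] (0:ℝ), H δ < cdet B + t / 2 :=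
      eventually_lt_of_limsup_lt (by rw [← hcdetB]; exact ENNReal.lt_add_right hY ht2)
    have hGH : ∀ᶠ δ in 𝓝[>] (0:ℝ), G δ + H δ ≤ z' := by
      filter_upwards [hGev, hHev] with δ hg hh
      have : G δ + H δ < (cdet A + t / 2) + (cdet B + t / 2) := ENNReal.add_lt_add hg hh
      refine this.le.trans (le_of_eq ?_)
      rw [show (cdet A + t / 2) + (cdet B + t / 2) = (cdet A + cdet B) + (t / 2 + t / 2) by ring,
        ENNReal.add_halves, ht_def, add_tsub_cancel_of_le hz1.le]
    -- choose the constant c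
    obtain ⟨c, hc1, hcz⟩ : ∃ c : ℝ, 1 < c ∧ ENNReal.ofReal c * z' ≤ z := by
      rcases eq_or_ne z' 0 with rfl | hz'0
      · exact ⟨2, one_lt_two, by simp⟩
      · have hz'R : 0 < z'.toReal := ENNReal.toReal_pos hz'0 hz'top
        have hzR : z'.toReal < z.toReal := ENNReal.toReal_strict_mono hztop hz2
        have hr : 1 < z.toReal / z'.toReal := (one_lt_div hz'R).2 hzR
        have hc1' : 1 < (1 + z.toReal / z'.toReal) / 2 := by linarith
        refine ⟨(1 + z.toReal / z'.toReal) / 2, hc1', ?_⟩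
        have hrw : z.toReal / z'.toReal * z'.toReal = z.toReal := div_mul_cancel₀ _ hz'R.ne'
        have hcle : (1 + z.toReal / z'.toReal) / 2 * z'.toReal ≤ z.toReal := by
          nlinarith
        calc ENNReal.ofReal ((1 + z.toReal / z'.toReal) / 2) * z'
            = ENNReal.ofReal ((1 + z.toReal / z'.toReal) / 2) * ENNReal.ofReal z'.toReal := by
              rw [ENNReal.ofReal_toReal hz'top]
          _ = ENNReal.ofReal ((1 + z.toReal / z'.toReal) / 2 * z'.toReal) := by
              rw [ENNReal.ofReal_mul (by positivity)]
          _ ≤ ENNReal.ofReal z.toReal := ENNReal.ofReal_le_ofReal hcle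
          _ = z := ENNReal.ofReal_toReal hztop
    have hc0 : 0 < c := lt_trans one_pos hc1
    -- the eventual pointwise bound F δ ≤ ofReal c * (G δ + H δ)
    set δ₁ : ℝ := min 1 ((1 - 1 / c) * |d| / CA) with hδ₁
    have hδ₁0 : 0 < δ₁ := by
      apply lt_min one_pos
      have h1c : 0 < 1 - 1 / c := by
        rw [sub_pos, div_lt_one hc0]; exact hc1
      exact div_pos (mul_pos h1c hD) hCA0
    have hFGH : ∀ᶠ δ in 𝓝[>] (0:ℝ), F δ ≤ ENNReal.ofReal c * (G δ + H δ) := by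
      filter_upwards [Ioc_mem_nhdsGT hδ₁0] with δ hδ
      have hδ0 : 0 < δ := hδ.1
      have hδle1 : δ ≤ 1 := hδ.2.trans (min_le_left _ _)
      refine iSup₂_le fun A' hA' => ?_
      set d' : ℝ := A'.det with hd'
      set m' : ℝ := (A'.submatrix l.succAbove k.succAbove).det with hm'
      have hdet : |d' - d| ≤ δ * CA := by
        have := det_pert hδ0 hδle1 hA'
        rw [← hCA] at this
        exact this
      have hdd : |d' - d| ≤ (1 - 1 / c) * |d| := by
        refine hdet.trans ?_
        calc δ * CA ≤ ((1 - 1 / c) * |d| / CA) * CA := by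
              apply mul_le_mul_of_nonneg_right (hδ.2.trans (min_le_right _ _)) hCA0.le
          _ = (1 - 1 / c) * |d| := by field_simp
      have hd'abs : |d| / c ≤ |d'| := by
        have h1 : |d| - |d' - d| ≤ |d'| := by
          have := abs_sub_abs_le_abs_sub d d'
          have h2 : |d - d'| = |d' - d| := abs_sub_comm d d'
          linarith [abs_sub_abs_le_abs_sub d d', h2 ▸ this]
        have : |d| / c = |d| - (1 - 1 / c) * |d| := by field_simp; ring
        linarith
      have hd'0 : d' ≠ 0 := by
        intro h0
        rw [h0] at hd'abs
        simp only [abs_zero] at hd'abs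
        have : 0 < |d| / c := by positivity
        linarith
      have hcd : |d| ≤ c * |d'| := by
        rw [div_le_iff₀ hc0] at hd'abs
        linarith [hd'abs]
      -- rewrite entries
      have hγeq : |A'⁻¹ k l - A⁻¹ k l| = |m' / d' - m / d| := by
        rw [hγ' A', hγ, ← hd', ← hm']
        have : s * m' / d' - s * m / d = s * (m' / d' - m / d) := by ring
        rw [this, abs_mul, hs, one_mul]
      have hγabs : |A⁻¹ k l| = |m / d| := by
        rw [hγ]
        have : s * m / d = s * (m / d) := by ring
        rw [this, abs_mul, hs, one_mul]
      have hγpos : 0 < δ * |A⁻¹ k l| := by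
        rw [hγabs]
        have : m / d ≠ 0 := div_ne_zero hm hd
        have := abs_pos.2 this
        positivity
      have hreal := core_ineq d d' m m' δ c hd hm hd'0 hcd hδ0
      calc ENNReal.ofReal |A'⁻¹ k l - A⁻¹ k l| / ENNReal.ofReal (δ * |A⁻¹ k l|)
          = ENNReal.ofReal (|m' / d' - m / d| / (δ * |m / d|)) := by
            rw [← hγeq, ← hγabs, ENNReal.ofReal_div_of_pos hγpos]
        _ ≤ ENNReal.ofReal (c * (|d' - d| / (δ * |d|) + |m' - m| / (δ * |m|))) :=
            ENNReal.ofReal_le_ofReal hreal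
        _ = ENNReal.ofReal c * (ENNReal.ofReal (|d' - d| / (δ * |d|))
              + ENNReal.ofReal (|m' - m| / (δ * |m|))) := by
            rw [ENNReal.ofReal_mul hc0.le, ENNReal.ofReal_add (by positivity) (by positivity)]
        _ = ENNReal.ofReal c * (ENNReal.ofReal |d' - d| / ENNReal.ofReal (δ * |d|)
              + ENNReal.ofReal |m' - m| / ENNReal.ofReal (δ * |m|)) := by
            rw [ENNReal.ofReal_div_of_pos (mul_pos hδ0 hD), ENNReal.ofReal_div_of_pos (mul_pos hδ0 hM)]
        _ ≤ ENNReal.ofReal c * (G δ + H δ) := by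
            gcongr
            · exact le_iSup₂ (f := fun A'' (_ : A'' ∈ cball A δ) =>
                ENNReal.ofReal |A''.det - A.det| / ENNReal.ofReal (δ * |A.det|)) A' hA'
            · exact le_iSup₂ (f := fun B' (_ : B' ∈ cball B δ) =>
                ENNReal.ofReal |B'.det - B.det| / ENNReal.ofReal (δ * |B.det|))
                (A'.submatrix l.succAbove k.succAbove) (cball_submatrix hA' _ _)
    -- combine
    have hfinal : ∀ᶠ δ in 𝓝[>] (0:ℝ), F δ ≤ z := by
      filter_upwards [hFGH, hGH] with δ h1 h2
      calc F δ ≤ ENNReal.ofReal c * (G δ + H δ) := h1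
        _ ≤ ENNReal.ofReal c * z' := by gcongr
        _ ≤ z := hcz
    rw [hcinv]
    exact limsup_le_of_le (h := hfinal)
end

section
/- For a nonsingular n×n real matrix A, b ∈ ℝⁿ, x = A^{-1}b, and index k ∈ [n], the componentwise condition number of the k-th solution coordinate satisfies c_k(A,b) ≤ c_det(A) + c_det(R_k), where R_k is the matrix obtained by replacing the k-th column of A by b, and perturbations of (A,b) are componentwise relative. -/
open Matrix Filter Set
open scoped ENNReal Topology

set_option maxHeartbeats 1000000

/-- The componentwise condition number of the `k`-th coordinate of the solution of `Ax = b`,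
under componentwise relative perturbations of the pair `(A, b)`. -/
noncomputable def csol {m : ℕ} (A : Matrix (Fin m) (Fin m) ℝ) (b : Fin m → ℝ) (k : Fin m) :
    ℝ≥0∞ :=
  limsup
    (fun δ : ℝ => ⨆ A' ∈ cball A δ, ⨆ b' ∈ {b' : Fin m → ℝ | ∀ i, |b' i - b i| ≤ δ * |b i|},
      ENNReal.ofReal |A'⁻¹.mulVec b' k - A⁻¹.mulVec b k| /
        ENNReal.ofReal (δ * |A⁻¹.mulVec b k|))
    (𝓝[>] (0 : ℝ))

lemma aux_div_le {a b c : ℝ} (ha : 0 ≤ a) (hb : 0 ≤ b) (hc : 0 ≤ c)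
    (h : ENNReal.ofReal a / ENNReal.ofReal b ≤ ENNReal.ofReal c) : a ≤ c * b := by
  rcases eq_or_lt_of_le hb with hb0 | hb0
  · rcases eq_or_lt_of_le ha with ha0 | ha0
    · nlinarith
    · exfalso
      rw [← hb0] at h
      rw [ENNReal.ofReal_zero, ENNReal.div_zero (by simpa using ha0)] at h
      exact (lt_irrefl _ (lt_of_le_of_lt h ENNReal.ofReal_lt_top)).elim
  · have := (ENNReal.div_le_iff_le_mul (Or.inl (by simpa using hb0))
      (Or.inl ENNReal.ofReal_ne_top)).mp h
    rw [← ENNReal.ofReal_mul hc] at this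
    exact (ENNReal.ofReal_le_ofReal_iff (by positivity)).mp this

lemma aux_cramer {m : ℕ} (M : Matrix (Fin m) (Fin m) ℝ) (hM : M.det ≠ 0)
    (c : Fin m → ℝ) (k : Fin m) :
    M⁻¹.mulVec c k = (M.updateCol k c).det / M.det := by
  have h := congrFun (Matrix.det_smul_inv_mulVec_eq_cramer M c (isUnit_iff_ne_zero.mpr hM)) k
  rw [Matrix.cramer_apply] at h
  simp only [Matrix.smul_mulVec, Pi.smul_apply, smul_eq_mul] at h
  rw [eq_div_iff hM]
  linarith [h]

/-- For a nonsingular matrix `A`, `b ∈ ℝⁿ` and an index `k`,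
`c_k(A,b) ≤ c_det(A) + c_det(R_k)` where `R_k` is `A` with its `k`-th column replaced
by `b`. -/
theorem csol_le_cdet_add_cdet_cramer
    (m : ℕ) (A : Matrix (Fin m) (Fin m) ℝ) (hA : IsUnit A.det)
    (b : Fin m → ℝ) (k : Fin m) :
    csol A b k ≤ cdet A + cdet (A.updateCol k b) := by
  have hD : A.det ≠ 0 := isUnit_iff_ne_zero.mp hA
  set R₀ := A.updateCol k b with hR₀def
  rcases eq_or_ne (cdet A) ⊤ with hFtop | hFtop
  · rw [hFtop]; simp
  rcases eq_or_ne (cdet R₀) ⊤ with hGtop | hGtop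
  · rw [hGtop]; simp
  set Fr := (cdet A).toReal with hFrdef
  set Gr := (cdet R₀).toReal with hGrdef
  have hFr0 : 0 ≤ Fr := ENNReal.toReal_nonneg
  have hGr0 : 0 ≤ Gr := ENNReal.toReal_nonneg
  have claim : ∀ ε : ℝ, 0 < ε →
      csol A b k ≤ ENNReal.ofReal ((1 + ε) * ((Fr + ε) + (Gr + ε))) := by
    intro ε hε
    have hFε : 0 < Fr + ε := by linarith
    have hGε : 0 < Gr + ε := by linarith
    have E1 : ∀ᶠ δ in 𝓝[>] (0:ℝ),
        (⨆ A' ∈ cball A δ,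
          ENNReal.ofReal |A'.det - A.det| / ENNReal.ofReal (δ * |A.det|))
          ≤ ENNReal.ofReal (Fr + ε) := by
      have h1 : cdet A < ENNReal.ofReal (Fr + ε) := by
        conv_lhs => rw [← ENNReal.ofReal_toReal hFtop]
        exact (ENNReal.ofReal_lt_ofReal_iff hFε).mpr (by linarith)
      unfold cdet at h1
      exact (eventually_lt_of_limsup_lt h1).mono fun δ h => h.le
    have E2 : ∀ᶠ δ in 𝓝[>] (0:ℝ),
        (⨆ A' ∈ cball R₀ δ,
          ENNReal.ofReal |A'.det - R₀.det| / ENNReal.ofReal (δ * |R₀.det|))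
          ≤ ENNReal.ofReal (Gr + ε) := by
      have h1 : cdet R₀ < ENNReal.ofReal (Gr + ε) := by
        conv_lhs => rw [← ENNReal.ofReal_toReal hGtop]
        exact (ENNReal.ofReal_lt_ofReal_iff hGε).mpr (by linarith)
      unfold cdet at h1
      exact (eventually_lt_of_limsup_lt h1).mono fun δ h => h.le
    have E3 : ∀ᶠ δ in 𝓝[>] (0:ℝ), (0:ℝ) < δ := eventually_mem_nhdsWithin
    have E4 : ∀ᶠ δ in 𝓝[>] (0:ℝ), δ < ε / ((1 + ε) * (Fr + ε)) :=
      (eventually_lt_nhds (by positivity)).filter_mono nhdsWithin_le_nhds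
    have key : ∀ᶠ δ in 𝓝[>] (0:ℝ),
        (⨆ A' ∈ cball A δ, ⨆ b' ∈ {b' : Fin m → ℝ | ∀ i, |b' i - b i| ≤ δ * |b i|},
          ENNReal.ofReal |A'⁻¹.mulVec b' k - A⁻¹.mulVec b k| /
            ENNReal.ofReal (δ * |A⁻¹.mulVec b k|))
          ≤ ENNReal.ofReal ((1 + ε) * ((Fr + ε) + (Gr + ε))) := by
      filter_upwards [E1, E2, E3, E4] with δ h1 h2 hδ hδ'
      refine iSup₂_le fun A' hA' => iSup₂_le fun b' hb' => ?_
      have hbA : ENNReal.ofReal |A'.det - A.det| / ENNReal.ofReal (δ * |A.det|)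
          ≤ ENNReal.ofReal (Fr + ε) :=
        le_trans (le_iSup₂ (f := fun A'' (_ : A'' ∈ cball A δ) =>
          ENNReal.ofReal |A''.det - A.det| / ENNReal.ofReal (δ * |A.det|)) A' hA') h1
      have hΔD : |A'.det - A.det| ≤ (Fr + ε) * (δ * |A.det|) :=
        aux_div_le (abs_nonneg _) (by positivity) hFε.le hbA
      have hmem : A'.updateCol k b' ∈ cball R₀ δ := by
        intro i j
        by_cases hj : j = k
        · subst hj; simpa [Matrix.updateCol_apply, hR₀def] using hb' i
        · simpa [Matrix.updateCol_apply, hj, hR₀def] using hA' i j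
      have hbR : ENNReal.ofReal |(A'.updateCol k b').det - R₀.det| /
            ENNReal.ofReal (δ * |R₀.det|) ≤ ENNReal.ofReal (Gr + ε) :=
        le_trans (le_iSup₂ (f := fun A'' (_ : A'' ∈ cball R₀ δ) =>
          ENNReal.ofReal |A''.det - R₀.det| / ENNReal.ofReal (δ * |R₀.det|))
          (A'.updateCol k b') hmem) h2
      have hΔR : |(A'.updateCol k b').det - R₀.det| ≤ (Gr + ε) * (δ * |R₀.det|) :=
        aux_div_le (abs_nonneg _) (by positivity) hGε.le hbR
      set D := A.det with hDdef
      set D' := A'.det with hD'def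
      set R := R₀.det with hRdef
      set R' := (A'.updateCol k b').det with hR'def
      have hDpos : 0 < |D| := abs_pos.mpr hD
      have h8 : δ * ((1 + ε) * (Fr + ε)) < ε := (lt_div_iff₀ (by positivity)).mp hδ'
      have hDD' : |D| / (1 + ε) ≤ |D'| := by
        rw [div_le_iff₀ (by positivity : (0:ℝ) < 1 + ε)]
        have habs2 : |D| - |D'| ≤ |D' - D| := by
          have := abs_sub_abs_le_abs_sub D D'
          rwa [abs_sub_comm] at this
        nlinarith [mul_lt_mul_of_pos_right h8 hDpos, abs_nonneg D']
      have hD'pos : 0 < |D'| := lt_of_lt_of_le (by positivity) hDD'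
      have hD' : D' ≠ 0 := fun h => by simp [h] at hD'pos
      rw [aux_cramer A' hD' b' k, aux_cramer A hD b k, ← hDdef, ← hD'def, ← hRdef, ← hR'def]
      clear_value D D' R R'
      have hx : |R / D| = |R| / |D| := abs_div R D
      have hiden : R' / D' - R / D = (R' * D - R * D') / (D' * D) := by
        field_simp
      have habs3 : |R' / D' - R / D| * (|D'| * |D|) = |R' * D - R * D'| := by
        rw [hiden, abs_div, abs_mul, div_mul_cancel₀ _ (by positivity)]
      have hnum : |R' * D - R * D'| ≤ |R' - R| * |D| + |R| * |D' - D| := by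
        have h0 : R' * D - R * D' = (R' - R) * D - R * (D' - D) := by ring
        rw [h0]
        calc |(R' - R) * D - R * (D' - D)| ≤ |(R' - R) * D| + |R * (D' - D)| :=
              abs_sub _ _
          _ = |R' - R| * |D| + |R| * |D' - D| := by rw [abs_mul, abs_mul]
      have ht0 : 0 ≤ |R' / D' - R / D| := abs_nonneg _
      have step1 : |R' / D' - R / D| * (|D'| * |D|)
          ≤ ((Fr + ε) + (Gr + ε)) * (δ * (|R| * |D|)) := by
        rw [habs3]
        have h9 : |R' - R| * |D| ≤ (Gr + ε) * (δ * |R|) * |D| :=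
          mul_le_mul_of_nonneg_right hΔR (abs_nonneg D)
        have h10 : |R| * |D' - D| ≤ |R| * ((Fr + ε) * (δ * |D|)) :=
          mul_le_mul_of_nonneg_left hΔD (abs_nonneg R)
        nlinarith [hnum]
      have hDD2 : |D| ≤ (1 + ε) * |D'| := by
        rw [div_le_iff₀ (by positivity : (0:ℝ) < 1 + ε)] at hDD'
        linarith
      have step2 : |R' / D' - R / D| * |D| * |D|
          ≤ (1 + ε) * (|R' / D' - R / D| * (|D'| * |D|)) := by
        calc |R' / D' - R / D| * |D| * |D|
            ≤ (|R' / D' - R / D| * ((1 + ε) * |D'|)) * |D| :=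
              mul_le_mul_of_nonneg_right (mul_le_mul_of_nonneg_left hDD2 ht0) hDpos.le
          _ = (1 + ε) * (|R' / D' - R / D| * (|D'| * |D|)) := by ring
      have step3 : |R' / D' - R / D| * |D| * |D|
          ≤ (1 + ε) * (((Fr + ε) + (Gr + ε)) * (δ * (|R| * |D|))) :=
        le_trans step2 (mul_le_mul_of_nonneg_left step1 (by positivity))
      have main : |R' / D' - R / D| ≤ ((1 + ε) * ((Fr + ε) + (Gr + ε))) * (δ * |R / D|) := by
        rw [hx, show (1 + ε) * ((Fr + ε) + (Gr + ε)) * (δ * (|R| / |D|))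
            = ((1 + ε) * (((Fr + ε) + (Gr + ε)) * (δ * |R|))) / |D| from by ring,
          le_div_iff₀ hDpos]
        nlinarith [step3, hDpos]
      refine ENNReal.div_le_of_le_mul ?_
      rw [← ENNReal.ofReal_mul (by positivity)]
      exact le_trans (ENNReal.ofReal_le_ofReal main) (ENNReal.ofReal_le_ofReal (le_refl _))
    unfold csol
    exact limsup_le_of_le (by isBoundedDefault) key
  have tends : Tendsto (fun ε : ℝ => ENNReal.ofReal ((1 + ε) * ((Fr + ε) + (Gr + ε))))
      (𝓝[>] (0:ℝ)) (𝓝 (ENNReal.ofReal (Fr + Gr))) := by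
    have hc : Tendsto (fun ε : ℝ => (1 + ε) * ((Fr + ε) + (Gr + ε))) (𝓝 0)
        (𝓝 (Fr + Gr)) := by
      have : Continuous (fun ε : ℝ => (1 + ε) * ((Fr + ε) + (Gr + ε))) := by continuity
      have h := this.tendsto 0
      simpa using h
    exact ((ENNReal.continuous_ofReal.tendsto _).comp hc).mono_left nhdsWithin_le_nhds
  have final : csol A b k ≤ ENNReal.ofReal (Fr + Gr) :=
    ge_of_tendsto tends (eventually_mem_nhdsWithin.mono fun ε hε => claim ε hε)
  calc csol A b k ≤ ENNReal.ofReal (Fr + Gr) := final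
    _ = cdet A + cdet R₀ := by
      rw [ENNReal.ofReal_add hFr0 hGr0, hFrdef, hGrdef,
        ENNReal.ofReal_toReal hFtop, ENNReal.ofReal_toReal hGtop]
end
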